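/- arXiv:2512.24536 — 5 statements merged into one kernel-verified Lean document; each statement's English description precedes it below -/
import Mathlib

section
/- (Combinatorial Nullstellensatz) Let F be a field and f ∈ F[x₁,…,xₙ] a polynomial of total degree t₁ + t₂ + ⋯ + tₙ, where each tᵢ is a nonnegative integer. Suppose the coefficient of the monomial x₁^{t₁} x₂^{t₂} ⋯ xₙ^{tₙ} in f is nonzero. Then for any subsets S₁,…,Sₙ of F with |Sᵢ| ≥ tᵢ + 1, there exist s₁ ∈ S₁, …, sₙ ∈ Sₙ such that f(s₁,…,sₙ) ≠ 0. -/
open MvPolynomial Finset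

namespace CombNull

variable {F : Type} [Field F] {n : ℕ}

noncomputable def gpoly (f : MvPolynomial (Fin n) F) (i : Fin n) (a : F) : MvPolynomial (Fin n) F :=
  ∑ m ∈ f.support, monomial (m.erase i) (coeff m f) *
    ∑ k ∈ Finset.range (m i), X i ^ k * (C a : MvPolynomial (Fin n) F) ^ (m i - 1 - k)

noncomputable def hpoly (f : MvPolynomial (Fin n) F) (i : Fin n) (a : F) : MvPolynomial (Fin n) F :=
  ∑ m ∈ f.support, monomial (m.erase i) (coeff m f * a ^ (m i))

lemma gpoly_mul (f : MvPolynomial (Fin n) F) (i : Fin n) (a : F) :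
    gpoly f i a * (X i - C a) = f - hpoly f i a := by
  rw [gpoly, Finset.sum_mul]
  have key : ∀ m ∈ f.support,
      (monomial (m.erase i) (coeff m f) *
        ∑ k ∈ Finset.range (m i), X i ^ k * (C a : MvPolynomial (Fin n) F) ^ (m i - 1 - k))
        * (X i - C a)
      = monomial m (coeff m f) - monomial (m.erase i) (coeff m f * a ^ (m i)) := by
    intro m _
    rw [mul_assoc, geom_sum₂_mul, mul_sub]
    congr 1
    · rw [X_pow_eq_monomial, monomial_mul, mul_one, Finsupp.erase_add_single]
    · rw [← C_pow, mul_comm _ ((C (a ^ m i))), C_mul_monomial, mul_comm]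
  rw [Finset.sum_congr rfl key, Finset.sum_sub_distrib, support_sum_monomial_coeff, hpoly]

lemma erase_sum (m : Fin n →₀ ℕ) (i : Fin n) :
    ((m.erase i).sum fun _ e => e) + m i = m.sum fun _ e => e := by
  conv_rhs => rw [← Finsupp.erase_add_single i m]
  rw [Finsupp.sum_add_index' (fun _ => rfl) (fun _ _ _ => rfl),
    Finsupp.sum_single_index rfl]

lemma gpoly_totalDegree (f : MvPolynomial (Fin n) F) (i : Fin n) (a : F)
    (hf : 1 ≤ f.totalDegree) :
    (gpoly f i a).totalDegree ≤ f.totalDegree - 1 := by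
  refine (totalDegree_finset_sum _ _).trans (Finset.sup_le ?_)
  intro m hm
  rcases Nat.eq_zero_or_pos (m i) with h0 | h1
  · simp [h0]
  · refine (totalDegree_mul _ _).trans ?_
    have h2 : (monomial (m.erase i) (coeff m f)).totalDegree ≤
        (m.erase i).sum fun _ e => e := totalDegree_monomial_le _ _
    have h3 : (∑ k ∈ Finset.range (m i),
        X i ^ k * (C a : MvPolynomial (Fin n) F) ^ (m i - 1 - k)).totalDegree ≤ m i - 1 := by
      refine (totalDegree_finset_sum _ _).trans (Finset.sup_le ?_)
      intro k hk
      refine (totalDegree_mul _ _).trans ?_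
      rw [← C_pow]
      simp only [totalDegree_X_pow, totalDegree_C, add_zero]
      exact Nat.le_sub_one_of_lt (Finset.mem_range.mp hk)
    have h4 := erase_sum m i
    have h5 := le_totalDegree hm
    omega

lemma hpoly_coeff (f : MvPolynomial (Fin n) F) (i : Fin n) (a : F) (t : Fin n →₀ ℕ)
    (ht : t i ≠ 0) : coeff t (hpoly f i a) = 0 := by
  rw [hpoly, coeff_sum]
  refine Finset.sum_eq_zero fun m _ => ?_
  rw [coeff_monomial, if_neg]
  intro h
  apply ht
  rw [← h, Finsupp.erase_same]

lemma hpoly_eval (f : MvPolynomial (Fin n) F) (i : Fin n) (a : F) (s : Fin n → F) :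
    eval s (hpoly f i a) = eval (Function.update s i a) f := by
  rw [hpoly, map_sum, eval_eq' (Function.update s i a) f]
  refine Finset.sum_congr rfl fun m _ => ?_
  rw [eval_monomial, Finsupp.prod_fintype _ _ (fun j => pow_zero (s j))]
  have h1 : ∏ j, Function.update s i a j ^ m j
      = a ^ m i * ∏ j ∈ Finset.univ.erase i, s j ^ m j := by
    rw [← Finset.mul_prod_erase Finset.univ _ (Finset.mem_univ i), Function.update_self]
    congr 1
    refine Finset.prod_congr rfl fun j hj => ?_
    rw [Function.update_of_ne (Finset.ne_of_mem_erase hj)]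
  have h2 : ∏ j, s j ^ (m.erase i) j = ∏ j ∈ Finset.univ.erase i, s j ^ m j := by
    rw [← Finset.mul_prod_erase Finset.univ _ (Finset.mem_univ i), Finsupp.erase_same,
      pow_zero, one_mul]
    refine Finset.prod_congr rfl fun j hj => ?_
    rw [Finsupp.erase_ne (Finset.ne_of_mem_erase hj)]
  rw [h1, h2]
  ring

lemma eval_of_totalDegree_zero (f : MvPolynomial (Fin n) F) (hf : f.totalDegree = 0)
    (s : Fin n → F) : eval s f = coeff 0 f := by
  have hsup : ∀ m ∈ f.support, m = (0 : Fin n →₀ ℕ) := by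
    intro m hm
    ext j
    exact (totalDegree_eq_zero_iff (Fin n) f).mp hf m hm j
  rw [eval_eq']
  by_cases h0 : (0 : Fin n →₀ ℕ) ∈ f.support
  · have : f.support = {0} := by
      apply Finset.eq_singleton_iff_unique_mem.mpr
      exact ⟨h0, hsup⟩
    rw [this]
    simp
  · have : f.support = ∅ := by
      refine Finset.eq_empty_of_forall_notMem fun m hm => ?_
      exact h0 (hsup m hm ▸ hm)
    rw [this]
    simp only [Finset.sum_empty]
    rw [← notMem_support_iff.mp h0]

lemma fsum (t : Fin n → ℕ) :
    ((Finsupp.equivFunOnFinite.symm t).sum fun _ e => e) = ∑ j, t j := by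
  rw [Finsupp.sum_fintype _ _ (fun j => rfl)]
  rfl

lemma key : ∀ (N : ℕ) (f : MvPolynomial (Fin n) F) (t : Fin n → ℕ), (∑ i, t i) ≤ N →
    f.totalDegree = ∑ i, t i →
    ∀ S : Fin n → Finset F, (∀ i, t i + 1 ≤ (S i).card) →
    (∀ s : Fin n → F, (∀ i, s i ∈ S i) → eval s f = 0) →
    coeff (Finsupp.equivFunOnFinite.symm t) f = 0 := by
  classical
  intro N
  induction N with
  | zero =>
    intro f t hle hdeg S hS hvan
    have ht : ∀ i, t i = 0 := by
      intro i
      have := Finset.single_le_sum (f := t) (fun j _ => Nat.zero_le _) (Finset.mem_univ i)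
      omega
    have ht0 : Finsupp.equivFunOnFinite.symm t = 0 := by
      ext j; simp [ht j]
    have hne : ∀ i, (S i).Nonempty := fun i => Finset.card_pos.mp (by have := hS i; omega)
    have hdeg0 : f.totalDegree = 0 := by rw [hdeg]; omega
    rw [ht0, ← eval_of_totalDegree_zero f hdeg0 (fun i => (hne i).choose)]
    exact hvan _ fun i => (hne i).choose_spec
  | succ N ih =>
    intro f t hle hdeg S hS hvan
    by_cases htz : ∀ i, t i = 0
    · -- same as base case
      have ht0 : Finsupp.equivFunOnFinite.symm t = 0 := by
        ext j; simp [htz j]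
      have hne : ∀ i, (S i).Nonempty := fun i => Finset.card_pos.mp (by have := hS i; omega)
      have hdeg0 : f.totalDegree = 0 := by rw [hdeg]; simp [htz]
      rw [ht0, ← eval_of_totalDegree_zero f hdeg0 (fun i => (hne i).choose)]
      exact hvan _ fun i => (hne i).choose_spec
    · push_neg at htz
      obtain ⟨i, hti⟩ := htz
      have hne : (S i).Nonempty := Finset.card_pos.mp (by have := hS i; omega)
      obtain ⟨a, ha⟩ := hne
      set g := gpoly f i a with hg
      set h := hpoly f i a with hh
      have heq : f = g * (X i - C a) + h := by
        rw [hg, hh, gpoly_mul]; ring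
      have hsum1 : (∑ j ∈ Finset.univ.erase i, t j) + t i = ∑ j, t j :=
        Finset.sum_erase_add _ _ (Finset.mem_univ i)
      have hsumpos : 1 ≤ ∑ j, t j := by omega
      -- t' : decrement t at i
      set t' : Fin n → ℕ := Function.update t i (t i - 1) with ht'
      have hsum' : ∑ j, t' j = (∑ j, t j) - 1 := by
        rw [ht', Finset.sum_update_of_mem (Finset.mem_univ i)]
        have : ∑ j ∈ Finset.univ \ {i}, t j = ∑ j ∈ Finset.univ.erase i, t j := by
          rw [Finset.sdiff_singleton_eq_erase]
        omega
      -- coeff of g at t' equals coeff of f at t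
      have hsplit : Finsupp.equivFunOnFinite.symm t
          = Finsupp.equivFunOnFinite.symm t' + Finsupp.single i 1 := by
        ext j
        by_cases hj : j = i
        · subst hj; simp [ht', Function.update_self]; omega
        · simp [ht', Function.update_of_ne hj, Finsupp.single_eq_of_ne' (Ne.symm hj)]
      have hgdeg : g.totalDegree ≤ f.totalDegree - 1 :=
        gpoly_totalDegree f i a (by omega)
      have hcoeff_g0 : coeff (Finsupp.equivFunOnFinite.symm t) g = 0 := by
        apply coeff_eq_zero_of_totalDegree_lt
        have : (∑ j ∈ (Finsupp.equivFunOnFinite.symm t).support,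
            (Finsupp.equivFunOnFinite.symm t) j) = ∑ j, t j := fsum t
        omega
      have hcoeff_h0 : coeff (Finsupp.equivFunOnFinite.symm t) h = 0 := by
        apply hpoly_coeff
        simpa using hti
      have hcoeff_eq : coeff (Finsupp.equivFunOnFinite.symm t') g
          = coeff (Finsupp.equivFunOnFinite.symm t) f := by
        rw [heq, coeff_add, hcoeff_h0, add_zero, mul_sub, coeff_sub, hsplit,
          coeff_mul_X, mul_comm g (C a), coeff_C_mul, ← hsplit, hcoeff_g0, mul_zero, sub_zero]
      -- the shrunk grid
      set S' : Fin n → Finset F := Function.update S i ((S i).erase a) with hS'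
      have hS'card : ∀ j, t' j + 1 ≤ (S' j).card := by
        intro j
        by_cases hj : j = i
        · subst hj
          simp only [hS', ht', Function.update_self, Finset.card_erase_of_mem ha]
          have := hS j; omega
        · simp only [hS', ht', Function.update_of_ne hj]
          exact hS j
      have hvan' : ∀ s : Fin n → F, (∀ j, s j ∈ S' j) → eval s g = 0 := by
        intro s hs
        have hsS : ∀ j, s j ∈ S j := by
          intro j
          by_cases hj : j = i
          · subst hj
            have := hs j; rw [hS', Function.update_self] at this
            exact Finset.mem_of_mem_erase this
          · have := hs j; rwa [hS', Function.update_of_ne hj] at this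
        have h1 : eval s f = 0 := hvan s hsS
        have h2 : eval s h = 0 := by
          rw [hh, hpoly_eval]
          apply hvan
          intro j
          by_cases hj : j = i
          · subst hj; rw [Function.update_self]; exact ha
          · rw [Function.update_of_ne hj]; exact hsS j
        have h3 : eval s g * (s i - a) = 0 := by
          have := congrArg (eval s) heq
          simp only [map_add, map_mul, map_sub, eval_X, eval_C, h2, add_zero] at this
          rw [h1] at this
          linear_combination -this
        have hsi : s i ≠ a := by
          have := hs i; rw [hS', Function.update_self] at this
          exact Finset.ne_of_mem_erase this
        rcases mul_eq_zero.mp h3 with hx | hx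
        · exact hx
        · exact absurd (sub_eq_zero.mp hx) hsi
      -- apply IH: but need g.totalDegree = ∑ t'
      by_contra hc
      have hc' : coeff (Finsupp.equivFunOnFinite.symm t') g ≠ 0 := by
        rw [hcoeff_eq]; exact hc
      have hgdeg_ge : ∑ j, t' j ≤ g.totalDegree := by
        have := le_totalDegree (mem_support_iff.mpr hc')
        rwa [fsum t'] at this
      have hgdeg_eq : g.totalDegree = ∑ j, t' j := by omega
      have := ih g t' (by omega) hgdeg_eq S' hS'card hvan'
      exact hc' this

end CombNull

/-- **Combinatorial Nullstellensatz** (Alon–Tarsi / Alon).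
If `f` is a polynomial over a field `F` in `n` variables whose total degree is
`t₁ + ⋯ + tₙ` and the coefficient of `x₁^{t₁} ⋯ xₙ^{tₙ}` is nonzero, then for any
subsets `Sᵢ ⊆ F` with `|Sᵢ| ≥ tᵢ + 1` there are `sᵢ ∈ Sᵢ` with `f(s₁,…,sₙ) ≠ 0`. -/
theorem combinatorial_nullstellensatz
    {F : Type} [Field F] {n : ℕ} (f : MvPolynomial (Fin n) F) (t : Fin n → ℕ)
    (hdeg : f.totalDegree = ∑ i, t i)
    (hcoeff : MvPolynomial.coeff (Finsupp.equivFunOnFinite.symm t) f ≠ 0)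
    (S : Fin n → Finset F) (hS : ∀ i, t i + 1 ≤ (S i).card) :
    ∃ s : Fin n → F, (∀ i, s i ∈ S i) ∧ MvPolynomial.eval s f ≠ 0 := by
  by_contra hc
  push_neg at hc
  exact hcoeff (CombNull.key (∑ i, t i) f t le_rfl hdeg S hS
    fun s hs => by by_contra hz; exact hz (hc s hs))
end

section
/- Let X = {v₁,…,v₆} be the vertices of a 6-cycle with lists L(vᵢ) such that the antipodal pairs satisfy L(v₁) ∩ L(v₄) = ∅, L(v₂) ∩ L(v₅) = ∅, L(v₃) ∩ L(v₆) = ∅, and |L(vᵢ)| ≥ 3 for i ∈ {1,2,5,6}, |L(v₃)|, |L(v₄)| ≥ 2. Then there exist six pairwise distinct colors c₁,…,c₆ with cᵢ ∈ L(vᵢ) for all i; in particular these colors give a proper coloring of the square of the 6-cycle. -/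
/-- The square of the 6-cycle `v₁ v₂ v₃ v₄ v₅ v₆` (vertices indexed by `Fin 6` in
cyclic order): two distinct vertices are adjacent iff they are not antipodal. -/
def C6sq : SimpleGraph (Fin 6) where
  Adj i j := i ≠ j ∧ j ≠ i + 3
  symm := ⟨by intro i j h; revert i j h; decide⟩
  loopless := ⟨fun i h => h.1 rfl⟩

lemma single_bound (L : Fin 6 → Finset ℕ) (s : Finset (Fin 6)) (i : Fin 6) (hi : i ∈ s) :
    (L i).card ≤ (s.biUnion L).card :=
  Finset.card_le_card (fun x hx => Finset.mem_biUnion.2 ⟨i, hi, hx⟩)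

lemma pair_bound (L : Fin 6 → Finset ℕ) (s : Finset (Fin 6)) (i j : Fin 6)
    (hi : i ∈ s) (hj : j ∈ s) (hdisj : L i ∩ L j = ∅) :
    (L i).card + (L j).card ≤ (s.biUnion L).card := by
  have h1 : L i ∪ L j ⊆ s.biUnion L := by
    intro x hx
    rcases Finset.mem_union.1 hx with h | h
    · exact Finset.mem_biUnion.2 ⟨i, hi, h⟩
    · exact Finset.mem_biUnion.2 ⟨j, hj, h⟩
  have h2 : (L i ∪ L j).card = (L i).card + (L j).card := by
    rw [Finset.card_union_of_disjoint (Finset.disjoint_iff_inter_eq_empty.2 hdisj)]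
  calc (L i).card + (L j).card = (L i ∪ L j).card := h2.symm
    _ ≤ (s.biUnion L).card := Finset.card_le_card h1

/-- If the color lists on the vertices `v₁,…,v₆` of a 6-cycle satisfy that each
antipodal pair has disjoint lists, `|L(vᵢ)| ≥ 3` for `i ∈ {1,2,5,6}` and
`|L(v₃)|, |L(v₄)| ≥ 2`, then there is a system of six pairwise distinct colors
`cᵢ ∈ L(vᵢ)`; in particular these colors properly color the square of the 6-cycle. -/
theorem c6sq_distinct_colors_of_disjoint_antipodal_lists (L : Fin 6 → Finset ℕ)
    (hd1 : L 0 ∩ L 3 = ∅) (hd2 : L 1 ∩ L 4 = ∅) (hd3 : L 2 ∩ L 5 = ∅)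
    (h1 : 3 ≤ (L 0).card) (h2 : 3 ≤ (L 1).card) (h5 : 3 ≤ (L 4).card)
    (h6 : 3 ≤ (L 5).card) (h3 : 2 ≤ (L 2).card) (h4 : 2 ≤ (L 3).card) :
    ∃ c : Fin 6 → ℕ, (∀ i, c i ∈ L i) ∧ Function.Injective c ∧
      ∀ i j, C6sq.Adj i j → c i ≠ c j := by
  have hall : ∀ s : Finset (Fin 6), s.card ≤ (s.biUnion L).card := by
    intro s
    have hle2 : ∀ i, 2 ≤ (L i).card := by
      intro i
      match i with
      | 0 => omega
      | 1 => omega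
      | 2 => omega
      | 3 => omega
      | 4 => omega
      | 5 => omega
    rcases Nat.lt_or_ge s.card 3 with hs | hs
    · -- s.card ≤ 2
      rcases s.eq_empty_or_nonempty with rfl | ⟨i, hi⟩
      · simp
      · have := single_bound L s i hi
        have := hle2 i
        omega
    · rcases Nat.lt_or_ge s.card 4 with hs4 | hs4
      · -- s.card = 3
        have key : (0 ∈ s ∧ 3 ∈ s) ∨ (1 ∈ s ∧ 4 ∈ s) ∨ (2 ∈ s ∧ 5 ∈ s) ∨
            (0 ∈ s) ∨ (1 ∈ s) ∨ (4 ∈ s) ∨ (5 ∈ s) := by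
          have : ∀ t : Finset (Fin 6), 3 ≤ t.card →
              (0 ∈ t ∧ 3 ∈ t) ∨ (1 ∈ t ∧ 4 ∈ t) ∨ (2 ∈ t ∧ 5 ∈ t) ∨
              (0 ∈ t) ∨ (1 ∈ t) ∨ (4 ∈ t) ∨ (5 ∈ t) := by decide
          exact this s hs
        rcases key with ⟨ha, hb⟩ | ⟨ha, hb⟩ | ⟨ha, hb⟩ | ha | ha | ha | ha
        · have := pair_bound L s 0 3 ha hb hd1; omega
        · have := pair_bound L s 1 4 ha hb hd2; omega
        · have := pair_bound L s 2 5 ha hb hd3; omega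
        · have := single_bound L s 0 ha; omega
        · have := single_bound L s 1 ha; omega
        · have := single_bound L s 4 ha; omega
        · have := single_bound L s 5 ha; omega
      · rcases Nat.lt_or_ge s.card 6 with hs6 | hs6
        · -- 4 ≤ s.card ≤ 5 : contains an antipodal pair
          have key : (0 ∈ s ∧ 3 ∈ s) ∨ (1 ∈ s ∧ 4 ∈ s) ∨ (2 ∈ s ∧ 5 ∈ s) := by
            have : ∀ t : Finset (Fin 6), 4 ≤ t.card →
                (0 ∈ t ∧ 3 ∈ t) ∨ (1 ∈ t ∧ 4 ∈ t) ∨ (2 ∈ t ∧ 5 ∈ t) := by decide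
            exact this s hs4
          rcases key with ⟨ha, hb⟩ | ⟨ha, hb⟩ | ⟨ha, hb⟩
          · have := pair_bound L s 0 3 ha hb hd1; omega
          · have := pair_bound L s 1 4 ha hb hd2; omega
          · have := pair_bound L s 2 5 ha hb hd3; omega
        · -- s.card = 6 : contains 1 and 4
          have key : 1 ∈ s ∧ 4 ∈ s := by
            have : ∀ t : Finset (Fin 6), 6 ≤ t.card → 1 ∈ t ∧ 4 ∈ t := by decide
            exact this s hs6
          have := pair_bound L s 1 4 key.1 key.2 hd2
          have : s.card ≤ 6 := by
            calc s.card ≤ (Finset.univ : Finset (Fin 6)).card := Finset.card_le_univ s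
              _ = 6 := by simp
          omega
  obtain ⟨c, hcinj, hcmem⟩ := (Finset.all_card_le_biUnion_card_iff_exists_injective L).1 hall
  exact ⟨c, hcmem, hcinj, fun i j hadj => fun h => (show i ≠ j ∧ j ≠ i + 3 from hadj).1 (hcinj h)⟩
end

section
/- Let H be the 'pendant triangle' graph on vertices v₁,…,v₅ where v₁v₂, v₁v₃, v₂v₄, v₃v₄ are edges (a 4-cycle v₁v₂v₄v₃) and v₄v₅ is a pendant edge. Suppose each vertex has a list L with |L(v₁)| ≥ 2, |L(v₅)| ≥ 2, |L(vᵢ)| ≥ 3 for i ∈ {2,3,4}, |L(v₂) ∪ L(v₃) ∪ L(v₄)| ≥ 4, and additionally either |L(v₁)| ≥ 3 or |L(v₁) ∪ L(v₃)| ≥ 5. Then the square H² admits a proper coloring from the lists. -/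
section PendantAux

/-- "good pair" predicate: the pair `{x,y}` misses one element of `{p1,p2}`
and one of `{q1,q2}`. -/
def GoodP (p1 p2 q1 q2 x y : ℕ) : Prop :=
  x ≠ y ∧ ((p1≠x∧p1≠y)∨(p2≠x∧p2≠y)) ∧ ((q1≠x∧q1≠y)∨(q2≠x∧q2≠y))

instance (p1 p2 q1 q2 x y : ℕ) : Decidable (GoodP p1 p2 q1 q2 x y) := by
  unfold GoodP; infer_instance

lemma notGood {p1 p2 q1 q2 x y : ℕ} (h : ¬ GoodP p1 p2 q1 q2 x y) (hxy : x ≠ y) :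
    ((p1=x∨p1=y)∧(p2=x∨p2=y)) ∨ ((q1=x∨q1=y)∧(q2=x∨q2=y)) := by
  unfold GoodP at h; tauto

set_option maxHeartbeats 1000000 in
lemma pairZaux (b d1 d2 p1 p2 q1 q2 o : ℕ) (hd : d1 ≠ d2) (hp : p1 ≠ p2) (hq : q1 ≠ q2)
    (hbd1 : b ≠ d1) (hbd2 : b ≠ d2) (hbo : b ≠ o)
    (g1 : ¬ GoodP p1 p2 q1 q2 b d1) (g2 : ¬ GoodP p1 p2 q1 q2 b d2) :
    GoodP p1 p2 q1 q2 o d1 ∨ GoodP p1 p2 q1 q2 o d2 := by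
  have h1 := notGood g1 hbd1
  have h2 := notGood g2 hbd2
  clear g1 g2
  unfold GoodP
  rcases h1 with h1 | h1 <;> rcases h2 with h2 | h2
  · exfalso; omega
  · have hpb : p1 = b ∨ p2 = b := by omega
    have hqb : q1 = b ∨ q2 = b := by omega
    by_cases ho : o = d2
    · exact Or.inl ⟨by omega, by omega, by omega⟩
    · exact Or.inr ⟨by omega, by omega, by omega⟩
  · have hpb : p1 = b ∨ p2 = b := by omega
    have hqb : q1 = b ∨ q2 = b := by omega
    by_cases ho : o = d2
    · exact Or.inl ⟨by omega, by omega, by omega⟩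
    · exact Or.inr ⟨by omega, by omega, by omega⟩
  · exfalso; omega

lemma pairZ (b1 b2 d1 d2 p1 p2 q1 q2 : ℕ) (hb : b1 ≠ b2) (hd : d1 ≠ d2)
    (hp : p1 ≠ p2) (hq : q1 ≠ q2) :
    GoodP p1 p2 q1 q2 b1 d1 ∨ GoodP p1 p2 q1 q2 b1 d2 ∨
    GoodP p1 p2 q1 q2 b2 d1 ∨ GoodP p1 p2 q1 q2 b2 d2 ∨
    (((b1=d1∧b2=d2)∨(b1=d2∧b2=d1)) ∧
      ((b1=p1∧b2=p2)∨(b1=p2∧b2=p1)∨(b1=q1∧b2=q2)∨(b1=q2∧b2=q1))) := by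
  by_cases g1 : GoodP p1 p2 q1 q2 b1 d1; · tauto
  by_cases g2 : GoodP p1 p2 q1 q2 b1 d2; · tauto
  by_cases g3 : GoodP p1 p2 q1 q2 b2 d1; · tauto
  by_cases g4 : GoodP p1 p2 q1 q2 b2 d2; · tauto
  by_cases hb1 : b1 = d1 ∨ b1 = d2
  · by_cases hb2 : b2 = d1 ∨ b2 = d2
    · refine Or.inr (Or.inr (Or.inr (Or.inr ⟨by omega, ?_⟩)))
      rcases hb1 with h | h
      · have h2 : b2 = d2 := by omega
        have := notGood g2 (by omega)
        clear g1 g2 g3 g4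
        omega
      · have h2 : b2 = d1 := by omega
        have := notGood g1 (by omega)
        clear g1 g2 g3 g4
        omega
    · push_neg at hb2
      rcases pairZaux b2 d1 d2 p1 p2 q1 q2 b1 hd hp hq hb2.1 hb2.2 (Ne.symm hb) g3 g4 with h | h
      · exact absurd h g1
      · exact absurd h g2
  · push_neg at hb1
    rcases pairZaux b1 d1 d2 p1 p2 q1 q2 b2 hd hp hq hb1.1 hb1.2 hb g1 g2 with h | h
    · exact absurd h g3
    · exact absurd h g4

lemma card_pair_le (a b : ℕ) : ({a,b} : Finset ℕ).card ≤ 2 :=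
  (Finset.card_insert_le _ _).trans (by simp)

lemma card_triple_le (a b c : ℕ) : ({a,b,c} : Finset ℕ).card ≤ 3 :=
  (Finset.card_insert_le _ _).trans (Nat.succ_le_succ (card_pair_le b c))

lemma mem_of_sdiff2 (C : Finset ℕ) (a b : ℕ) (hC : 3 ≤ C.card) :
    ∃ x ∈ C, x ≠ a ∧ x ≠ b := by
  have h1 := Finset.le_card_sdiff ({a,b} : Finset ℕ) C
  have h2 := card_pair_le a b
  obtain ⟨x, hx⟩ := Finset.card_pos.mp (by omega : 0 < (C \ ({a,b}:Finset ℕ)).card)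
  rw [Finset.mem_sdiff] at hx
  refine ⟨x, hx.1, ?_, ?_⟩ <;> · intro h; exact hx.2 (by simp [h])

lemma sdiff3_cases (D : Finset ℕ) (a b c : ℕ) :
    (∃ x ∈ D, x ≠ a ∧ x ≠ b ∧ x ≠ c) ∨ D ⊆ {a,b,c} := by
  by_cases h : (D \ ({a,b,c}:Finset ℕ)).Nonempty
  · left
    obtain ⟨x, hx⟩ := h
    rw [Finset.mem_sdiff] at hx
    refine ⟨x, hx.1, ?_, ?_, ?_⟩ <;> · intro h'; exact hx.2 (by simp [h'])
  · right
    rw [Finset.not_nonempty_iff_eq_empty, Finset.sdiff_eq_empty_iff_subset] at h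
    exact h

lemma eq3_of_subset (D : Finset ℕ) (a b c : ℕ) (h : D ⊆ {a,b,c}) (hD : 3 ≤ D.card) :
    D = {a,b,c} :=
  Finset.eq_of_subset_of_card_le h ((card_triple_le a b c).trans hD)

lemma exists_outside (U S : Finset ℕ) (hU : 4 ≤ U.card) (hS : S.card ≤ 3) :
    ∃ w ∈ U, w ∉ S :=
  Finset.not_subset.mp (fun h => by have := Finset.card_le_card h; omega)

lemma four_in_three (B : Finset ℕ) (a b c d : ℕ) (ha : a ∈ B) (hb : b ∈ B) (hc : c ∈ B)
    (hd : d ∈ B) (hab : a≠b) (hac : a≠c) (had : a≠d) (hbc : b≠c) (hbd : b≠d) (hcd : c≠d)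
    (hcard : B.card = 3) : False := by
  have hsub : ({a,b,c,d} : Finset ℕ) ⊆ B := by
    intro x hx
    simp only [Finset.mem_insert, Finset.mem_singleton] at hx
    rcases hx with rfl|rfl|rfl|rfl <;> assumption
  have h4 : ({a,b,c,d} : Finset ℕ).card = 4 := by
    rw [Finset.card_insert_of_notMem (by simp [hab, hac, had]),
      Finset.card_insert_of_notMem (by simp [hbc, hbd]),
      Finset.card_insert_of_notMem (by simp [hcd]), Finset.card_singleton]
  have := Finset.card_le_card hsub
  omega

end PendantAux

section HelperX

lemma helperXs (B C D : Finset ℕ) (z q1 q2 : ℕ) (hq : q1 ≠ q2) (hz2 : z ≠ q2)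
    (hzB : z ∈ B) (hC : 3 ≤ C.card) (hD : 3 ≤ D.card) (hu : 4 ≤ (B ∪ C ∪ D).card) :
    ∃ x2 x3 x4, x2 ∈ B ∧ x3 ∈ C ∧ x4 ∈ D ∧ x2 ≠ x3 ∧ x2 ≠ x4 ∧ x3 ≠ x4 ∧
      (z = x2 ∨ z = x3 ∨ z = x4) ∧
      ((q1 ≠ x2 ∧ q1 ≠ x3 ∧ q1 ≠ x4) ∨ (q2 ≠ x2 ∧ q2 ≠ x3 ∧ q2 ≠ x4)) := by
  by_cases hzq : z = q1
  · subst hzq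
    obtain ⟨x3, hx3C, hx3z, hx3q2⟩ := mem_of_sdiff2 C z q2 hC
    rcases sdiff3_cases D z q2 x3 with ⟨x4, hx4D, h4z, h4q2, h4x3⟩ | hDsub
    · exact ⟨z, x3, x4, hzB, hx3C, hx4D, Ne.symm hx3z, Ne.symm h4z, Ne.symm h4x3,
        Or.inl rfl, Or.inr ⟨Ne.symm hz2, Ne.symm hx3q2, Ne.symm h4q2⟩⟩
    · have hDeq : D = {z, q2, x3} := eq3_of_subset D z q2 x3 hDsub hD
      rcases sdiff3_cases C z q2 x3 with ⟨x3', h3C, h3z, h3q2, h3x3⟩ | hCsub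
      · have hx3D : x3 ∈ D := by rw [hDeq]; simp
        exact ⟨z, x3', x3, hzB, h3C, hx3D, Ne.symm h3z, Ne.symm hx3z, h3x3,
          Or.inl rfl, Or.inr ⟨Ne.symm hz2, Ne.symm h3q2, Ne.symm hx3q2⟩⟩
      · obtain ⟨w, hwU, hwS⟩ := exists_outside (B ∪ C ∪ D) {z, q2, x3} hu (card_triple_le _ _ _)
        have hwB : w ∈ B := by
          rcases Finset.mem_union.mp hwU with h | h
          · rcases Finset.mem_union.mp h with h | h
            · exact h
            · exact absurd (hCsub h) hwS
          · exact absurd (hDsub h) hwS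
        have hw : w ≠ z ∧ w ≠ q2 ∧ w ≠ x3 := by
          refine ⟨?_, ?_, ?_⟩ <;> · intro h; exact hwS (by simp [h])
        have hzD : z ∈ D := by rw [hDeq]; simp
        exact ⟨w, x3, z, hwB, hx3C, hzD, hw.2.2, hw.1, hx3z,
          Or.inr (Or.inr rfl), Or.inr ⟨Ne.symm hw.2.1, Ne.symm hx3q2, Ne.symm hz2⟩⟩
  · rcases sdiff3_cases C z q1 q2 with ⟨x3, hx3C, h3z, h3q1, h3q2⟩ | hCsub
    · obtain ⟨x4, hx4D, h4z, h4x3⟩ := mem_of_sdiff2 D z x3 hD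
      refine ⟨z, x3, x4, hzB, hx3C, hx4D, Ne.symm h3z, Ne.symm h4z, Ne.symm h4x3,
        Or.inl rfl, ?_⟩
      by_cases h : q1 = x4
      · exact Or.inr ⟨Ne.symm hz2, Ne.symm h3q2, by omega⟩
      · exact Or.inl ⟨Ne.symm hzq, Ne.symm h3q1, h⟩
    · have hq1C : q1 ∈ C := by
        have := eq3_of_subset C z q1 q2 hCsub hC
        rw [this]; simp
      rcases sdiff3_cases D z q1 q2 with ⟨x4, hx4D, h4z, h4q1, h4q2⟩ | hDsub
      · exact ⟨z, q1, x4, hzB, hq1C, hx4D, hzq, Ne.symm h4z, Ne.symm h4q1,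
          Or.inl rfl, Or.inr ⟨Ne.symm hz2, Ne.symm hq, Ne.symm h4q2⟩⟩
      · have hDeq : D = {z, q1, q2} := eq3_of_subset D z q1 q2 hDsub hD
        obtain ⟨w, hwU, hwS⟩ := exists_outside (B ∪ C ∪ D) {z, q1, q2} hu (card_triple_le _ _ _)
        have hwB : w ∈ B := by
          rcases Finset.mem_union.mp hwU with h | h
          · rcases Finset.mem_union.mp h with h | h
            · exact h
            · exact absurd (hCsub h) hwS
          · exact absurd (hDsub h) hwS
        have hw : w ≠ z ∧ w ≠ q1 ∧ w ≠ q2 := by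
          refine ⟨?_, ?_, ?_⟩ <;> · intro h; exact hwS (by simp [h])
        have hzD : z ∈ D := by rw [hDeq]; simp
        exact ⟨w, q1, z, hwB, hq1C, hzD, hw.2.1, hw.1, Ne.symm hzq,
          Or.inr (Or.inr rfl), Or.inr ⟨Ne.symm hw.2.2, Ne.symm hq, Ne.symm hz2⟩⟩

lemma helperX (B C D : Finset ℕ) (z q1 q2 : ℕ) (hq : q1 ≠ q2) (hzB : z ∈ B)
    (hC : 3 ≤ C.card) (hD : 3 ≤ D.card) (hu : 4 ≤ (B ∪ C ∪ D).card) :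
    ∃ x2 x3 x4, x2 ∈ B ∧ x3 ∈ C ∧ x4 ∈ D ∧ x2 ≠ x3 ∧ x2 ≠ x4 ∧ x3 ≠ x4 ∧
      (z = x2 ∨ z = x3 ∨ z = x4) ∧
      ((q1 ≠ x2 ∧ q1 ≠ x3 ∧ q1 ≠ x4) ∨ (q2 ≠ x2 ∧ q2 ≠ x3 ∧ q2 ≠ x4)) := by
  by_cases hz2 : z = q2
  · have hz1 : z ≠ q1 := by rw [hz2]; exact Ne.symm hq
    obtain ⟨x2, x3, x4, m2, m3, m4, n1, n2, n3, hzT, hQ⟩ :=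
      helperXs B C D z q2 q1 (Ne.symm hq) hz1 hzB hC hD hu
    exact ⟨x2, x3, x4, m2, m3, m4, n1, n2, n3, hzT, hQ.symm⟩
  · exact helperXs B C D z q1 q2 hq hz2 hzB hC hD hu

end HelperX

section AttemptY

set_option maxHeartbeats 3000000 in
lemma attemptY (B D : Finset ℕ) (p1 p2 q1 q2 x3 : ℕ) (hB : 3 ≤ B.card) (hD : 3 ≤ D.card)
    (hp : p1 ≠ p2) (hq : q1 ≠ q2) :
    (∃ x y, x ∈ B ∧ y ∈ D ∧ x ≠ x3 ∧ y ≠ x3 ∧ GoodP p1 p2 q1 q2 x y) ∨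
    (B = D ∧ x3 ∈ B ∧ B.card = 3 ∧ ((p1 ∈ B ∧ p2 ∈ B) ∨ (q1 ∈ B ∧ q2 ∈ B))) := by
  have hsB := Finset.le_card_sdiff ({x3} : Finset ℕ) B
  have hsD := Finset.le_card_sdiff ({x3} : Finset ℕ) D
  rw [Finset.card_singleton] at hsB hsD
  obtain ⟨b1, hb1, b2, hb2, hb⟩ := Finset.one_lt_card.mp (by omega : 1 < (B \ {x3}).card)
  obtain ⟨d1, hd1, d2, hd2, hd⟩ := Finset.one_lt_card.mp (by omega : 1 < (D \ {x3}).card)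
  rw [Finset.mem_sdiff, Finset.mem_singleton] at hb1 hb2 hd1 hd2
  rcases pairZ b1 b2 d1 d2 p1 p2 q1 q2 hb hd hp hq with g|g|g|g|⟨hm, hpq⟩
  · exact Or.inl ⟨b1, d1, hb1.1, hd1.1, hb1.2, hd1.2, g⟩
  · exact Or.inl ⟨b1, d2, hb1.1, hd2.1, hb1.2, hd2.2, g⟩
  · exact Or.inl ⟨b2, d1, hb2.1, hd1.1, hb2.2, hd1.2, g⟩
  · exact Or.inl ⟨b2, d2, hb2.1, hd2.1, hb2.2, hd2.2, g⟩
  by_cases hB3 : 3 ≤ (B \ ({x3} : Finset ℕ)).card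
  · obtain ⟨c1, c2, c3, hc1, hc2, hc3, h12, h13, h23⟩ :=
      Finset.two_lt_card_iff.mp (by omega : 2 < (B \ ({x3}:Finset ℕ)).card)
    rw [Finset.mem_sdiff, Finset.mem_singleton] at hc1 hc2 hc3
    rcases pairZ c1 c2 d1 d2 p1 p2 q1 q2 h12 hd hp hq with g|g|g|g|⟨hm1, _⟩
    · exact Or.inl ⟨c1, d1, hc1.1, hd1.1, hc1.2, hd1.2, g⟩
    · exact Or.inl ⟨c1, d2, hc1.1, hd2.1, hc1.2, hd2.2, g⟩
    · exact Or.inl ⟨c2, d1, hc2.1, hd1.1, hc2.2, hd1.2, g⟩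
    · exact Or.inl ⟨c2, d2, hc2.1, hd2.1, hc2.2, hd2.2, g⟩
    rcases pairZ c1 c3 d1 d2 p1 p2 q1 q2 h13 hd hp hq with g|g|g|g|⟨hm2, _⟩
    · exact Or.inl ⟨c1, d1, hc1.1, hd1.1, hc1.2, hd1.2, g⟩
    · exact Or.inl ⟨c1, d2, hc1.1, hd2.1, hc1.2, hd2.2, g⟩
    · exact Or.inl ⟨c3, d1, hc3.1, hd1.1, hc3.2, hd1.2, g⟩
    · exact Or.inl ⟨c3, d2, hc3.1, hd2.1, hc3.2, hd2.2, g⟩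
    exfalso; omega
  by_cases hD3 : 3 ≤ (D \ ({x3} : Finset ℕ)).card
  · obtain ⟨e1, e2, e3, he1, he2, he3, k12, k13, k23⟩ :=
      Finset.two_lt_card_iff.mp (by omega : 2 < (D \ ({x3}:Finset ℕ)).card)
    rw [Finset.mem_sdiff, Finset.mem_singleton] at he1 he2 he3
    rcases pairZ b1 b2 e1 e2 p1 p2 q1 q2 hb k12 hp hq with g|g|g|g|⟨hm1, _⟩
    · exact Or.inl ⟨b1, e1, hb1.1, he1.1, hb1.2, he1.2, g⟩
    · exact Or.inl ⟨b1, e2, hb1.1, he2.1, hb1.2, he2.2, g⟩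
    · exact Or.inl ⟨b2, e1, hb2.1, he1.1, hb2.2, he1.2, g⟩
    · exact Or.inl ⟨b2, e2, hb2.1, he2.1, hb2.2, he2.2, g⟩
    rcases pairZ b1 b2 e1 e3 p1 p2 q1 q2 hb k13 hp hq with g|g|g|g|⟨hm2, _⟩
    · exact Or.inl ⟨b1, e1, hb1.1, he1.1, hb1.2, he1.2, g⟩
    · exact Or.inl ⟨b1, e3, hb1.1, he3.1, hb1.2, he3.2, g⟩
    · exact Or.inl ⟨b2, e1, hb2.1, he1.1, hb2.2, he1.2, g⟩
    · exact Or.inl ⟨b2, e3, hb2.1, he3.1, hb2.2, he3.2, g⟩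
    rcases pairZ b1 b2 e2 e3 p1 p2 q1 q2 hb k23 hp hq with g|g|g|g|⟨hm3, _⟩
    · exact Or.inl ⟨b1, e2, hb1.1, he2.1, hb1.2, he2.2, g⟩
    · exact Or.inl ⟨b1, e3, hb1.1, he3.1, hb1.2, he3.2, g⟩
    · exact Or.inl ⟨b2, e2, hb2.1, he2.1, hb2.2, he2.2, g⟩
    · exact Or.inl ⟨b2, e3, hb2.1, he3.1, hb2.2, he3.2, g⟩
    exfalso; omega
  -- both B \ {x3} and D \ {x3} have exactly two elements
  have hBeq : B \ ({x3} : Finset ℕ) = {b1, b2} := by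
    refine (Finset.eq_of_subset_of_card_le ?_ ?_).symm
    · intro a ha
      simp only [Finset.mem_insert, Finset.mem_singleton] at ha
      rw [Finset.mem_sdiff, Finset.mem_singleton]
      rcases ha with rfl | rfl
      exacts [hb1, hb2]
    · rw [Finset.card_pair hb]; omega
  have hDeq : D \ ({x3} : Finset ℕ) = {d1, d2} := by
    refine (Finset.eq_of_subset_of_card_le ?_ ?_).symm
    · intro a ha
      simp only [Finset.mem_insert, Finset.mem_singleton] at ha
      rw [Finset.mem_sdiff, Finset.mem_singleton]
      rcases ha with rfl | rfl
      exacts [hd1, hd2]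
    · rw [Finset.card_pair hd]; omega
  have hBfull : B = {x3, b1, b2} := by
    apply Finset.eq_of_subset_of_card_le
    · intro a ha
      by_cases hax : a = x3
      · simp [hax]
      · have : a ∈ B \ ({x3} : Finset ℕ) := by
          rw [Finset.mem_sdiff, Finset.mem_singleton]; exact ⟨ha, hax⟩
        rw [hBeq] at this
        simp only [Finset.mem_insert, Finset.mem_singleton] at this ⊢
        tauto
    · exact (card_triple_le _ _ _).trans hB
  have hDfull : D = {x3, d1, d2} := by
    apply Finset.eq_of_subset_of_card_le
    · intro a ha
      by_cases hax : a = x3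
      · simp [hax]
      · have : a ∈ D \ ({x3} : Finset ℕ) := by
          rw [Finset.mem_sdiff, Finset.mem_singleton]; exact ⟨ha, hax⟩
        rw [hDeq] at this
        simp only [Finset.mem_insert, Finset.mem_singleton] at this ⊢
        tauto
    · exact (card_triple_le _ _ _).trans hD
  have hx3B : x3 ∈ B := by rw [hBfull]; simp
  have hBcard : B.card = 3 := le_antisymm (by rw [hBfull]; exact card_triple_le _ _ _) hB
  have hBD : B = D := by
    rw [hBfull, hDfull]
    rcases hm with ⟨h1, h2⟩ | ⟨h1, h2⟩
    · rw [h1, h2]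
    · rw [h1, h2, Finset.pair_comm d2 d1]
  refine Or.inr ⟨hBD, hx3B, hBcard, ?_⟩
  rcases hpq with ⟨h1, h2⟩ | ⟨h1, h2⟩ | ⟨h1, h2⟩ | ⟨h1, h2⟩
  · exact Or.inl ⟨h1 ▸ hb1.1, h2 ▸ hb2.1⟩
  · exact Or.inl ⟨h2 ▸ hb2.1, h1 ▸ hb1.1⟩
  · exact Or.inr ⟨h1 ▸ hb1.1, h2 ▸ hb2.1⟩
  · exact Or.inr ⟨h2 ▸ hb2.1, h1 ▸ hb1.1⟩

end AttemptY

section Core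

lemma Ewit {E : Finset ℕ} {q1 q2 u v w : ℕ} (h1 : q1 ∈ E) (h2 : q2 ∈ E)
    (h : (q1≠u∧q1≠v∧q1≠w) ∨ (q2≠u∧q2≠v∧q2≠w)) : ∃ e ∈ E, e ≠ u ∧ e ≠ v ∧ e ≠ w := by
  rcases h with ⟨a, b, c⟩ | ⟨a, b, c⟩
  exacts [⟨q1, h1, a, b, c⟩, ⟨q2, h2, a, b, c⟩]

lemma Awit {A A' : Finset ℕ} (hsub : A' ⊆ A) (hcard : A'.card = 3) {z u v w : ℕ}
    (hz : z ∉ A') (hzT : z = u ∨ z = v ∨ z = w) : ∃ a ∈ A, a ≠ u ∧ a ≠ v ∧ a ≠ w := by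
  by_contra hcon
  push_neg at hcon
  have hsub2 : insert z A' ⊆ ({u, v, w} : Finset ℕ) := by
    intro a ha
    simp only [Finset.mem_insert, Finset.mem_singleton]
    rcases Finset.mem_insert.mp ha with rfl | haA'
    · tauto
    · have := hcon a (hsub haA')
      by_cases h1 : a = u
      · tauto
      by_cases h2 : a = v
      · tauto
      exact Or.inr (Or.inr (this h1 h2))
  have h4 : (insert z A').card = 4 := by rw [Finset.card_insert_of_notMem hz, hcard]
  have hle := Finset.card_le_card hsub2
  have := card_triple_le u v w
  omega

lemma finishY {A B C D E : Finset ℕ} {p1 p2 q1 q2 x3 x y : ℕ}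
    (hp1A : p1 ∈ A) (hp2A : p2 ∈ A) (hq1E : q1 ∈ E) (hq2E : q2 ∈ E)
    (hx3C : x3 ∈ C) (h3p1 : x3 ≠ p1) (h3p2 : x3 ≠ p2) (h3q1 : x3 ≠ q1) (h3q2 : x3 ≠ q2)
    (hxB : x ∈ B) (hyD : y ∈ D) (hx3x : x ≠ x3) (hy3 : y ≠ x3)
    (g : GoodP p1 p2 q1 q2 x y) :
    ∃ x2 x3' x4, x2 ∈ B ∧ x3' ∈ C ∧ x4 ∈ D ∧ x2 ≠ x3' ∧ x2 ≠ x4 ∧ x3' ≠ x4 ∧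
      (∃ a ∈ A, a ≠ x2 ∧ a ≠ x3' ∧ a ≠ x4) ∧ (∃ e ∈ E, e ≠ x2 ∧ e ≠ x3' ∧ e ≠ x4) := by
  obtain ⟨gxy, gp, gq⟩ := g
  refine ⟨x, x3, y, hxB, hx3C, hyD, hx3x, gxy, Ne.symm hy3, ?_, ?_⟩
  · rcases gp with ⟨h1, h2⟩ | ⟨h1, h2⟩
    · exact ⟨p1, hp1A, h1, Ne.symm h3p1, h2⟩
    · exact ⟨p2, hp2A, h1, Ne.symm h3p2, h2⟩
  · rcases gq with ⟨h1, h2⟩ | ⟨h1, h2⟩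
    · exact ⟨q1, hq1E, h1, Ne.symm h3q1, h2⟩
    · exact ⟨q2, hq2E, h1, Ne.symm h3q2, h2⟩

set_option maxHeartbeats 4000000 in
lemma core (A B C D E : Finset ℕ) (hA : 2 ≤ A.card) (hE : 2 ≤ E.card)
    (hB : 3 ≤ B.card) (hC : 3 ≤ C.card) (hD : 3 ≤ D.card)
    (hu : 4 ≤ (B ∪ C ∪ D).card)
    (hex : 3 ≤ A.card ∨ 5 ≤ (A ∪ C).card) :
    ∃ x2 x3 x4, x2 ∈ B ∧ x3 ∈ C ∧ x4 ∈ D ∧ x2 ≠ x3 ∧ x2 ≠ x4 ∧ x3 ≠ x4 ∧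
      (∃ a ∈ A, a ≠ x2 ∧ a ≠ x3 ∧ a ≠ x4) ∧ (∃ e ∈ E, e ≠ x2 ∧ e ≠ x3 ∧ e ≠ x4) := by
  obtain ⟨q1, hq1E, q2, hq2E, hq⟩ := Finset.one_lt_card.mp (by omega : 1 < E.card)
  rcases Nat.lt_or_ge A.card 3 with hA2 | hA3
  -- ===== Case 2 : |A| = 2 =====
  · have hAC : 5 ≤ (A ∪ C).card := by
      rcases hex with h | h
      · omega
      · exact h
    obtain ⟨p1, hp1A, p2, hp2A, hp⟩ := Finset.one_lt_card.mp (by omega : 1 < A.card)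
    have hAeq : A = {p1, p2} := by
      refine (Finset.eq_of_subset_of_card_le ?_ ?_).symm
      · intro a ha
        simp only [Finset.mem_insert, Finset.mem_singleton] at ha
        rcases ha with rfl | rfl
        exacts [hp1A, hp2A]
      · rw [Finset.card_pair hp]; omega
    have hCA : 3 ≤ (C \ A).card := by
      have h1 := Finset.card_sdiff_add_card C A
      rw [Finset.union_comm] at h1
      omega
    -- membership in C \ A gives the four disequalities with p1 p2 plus ∈ C
    have memCA : ∀ x ∈ C \ A, x ∈ C ∧ x ≠ p1 ∧ x ≠ p2 := by
      intro x hx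
      rw [Finset.mem_sdiff, hAeq] at hx
      refine ⟨hx.1, ?_, ?_⟩ <;> · intro h; exact hx.2 (by simp [h])
    have hCQ := Finset.le_card_sdiff ({q1, q2} : Finset ℕ) (C \ A)
    have hq12 := card_pair_le q1 q2
    by_cases hα : 2 ≤ ((C \ A) \ ({q1, q2} : Finset ℕ)).card
    -- ----- Case α : two choices for x3 -----
    · obtain ⟨x0, hx0', x1, hx1', hx01⟩ :=
        Finset.one_lt_card.mp (by omega : 1 < ((C \ A) \ ({q1, q2} : Finset ℕ)).card)
      have hx0CA : x0 ∈ C \ A := (Finset.mem_sdiff.mp hx0').1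
      have hx1CA : x1 ∈ C \ A := (Finset.mem_sdiff.mp hx1').1
      obtain ⟨hx0C, hx0p1, hx0p2⟩ := memCA x0 hx0CA
      obtain ⟨hx1C, hx1p1, hx1p2⟩ := memCA x1 hx1CA
      have hx0q : x0 ≠ q1 ∧ x0 ≠ q2 := by
        have := (Finset.mem_sdiff.mp hx0').2
        refine ⟨?_, ?_⟩ <;> · intro h; exact this (by simp [h])
      have hx1q : x1 ≠ q1 ∧ x1 ≠ q2 := by
        have := (Finset.mem_sdiff.mp hx1').2
        refine ⟨?_, ?_⟩ <;> · intro h; exact this (by simp [h])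
      rcases attemptY B D p1 p2 q1 q2 x0 hB hD hp hq with ⟨x, y, hxB, hyD, hxx0, hyx0, g⟩ | hf0
      · exact finishY hp1A hp2A hq1E hq2E hx0C hx0p1 hx0p2 hx0q.1 hx0q.2 hxB hyD hxx0 hyx0 g
      rcases attemptY B D p1 p2 q1 q2 x1 hB hD hp hq with ⟨x, y, hxB, hyD, hxx1, hyx1, g⟩ | hf1
      · exact finishY hp1A hp2A hq1E hq2E hx1C hx1p1 hx1p2 hx1q.1 hx1q.2 hxB hyD hxx1 hyx1 g
      exfalso
      obtain ⟨_, hx0B, hBc, hpq0⟩ := hf0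
      obtain ⟨_, hx1B, _, _⟩ := hf1
      rcases hpq0 with ⟨hu1, hu2⟩ | ⟨hu1, hu2⟩
      · exact four_in_three B x0 x1 p1 p2 hx0B hx1B hu1 hu2 hx01 hx0p1 hx0p2 hx1p1 hx1p2 hp hBc
      · exact four_in_three B x0 x1 q1 q2 hx0B hx1B hu1 hu2 hx01 hx0q.1 hx0q.2 hx1q.1 hx1q.2 hq hBc
    -- ----- Case β : C \ A = {x0, q1, q2} -----
    · obtain ⟨x0, hx0'⟩ := Finset.card_pos.mp (by omega : 0 < ((C \ A) \ ({q1,q2}:Finset ℕ)).card)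
      have hx0CA : x0 ∈ C \ A := (Finset.mem_sdiff.mp hx0').1
      obtain ⟨hx0C, hx0p1, hx0p2⟩ := memCA x0 hx0CA
      have hx0q : x0 ≠ q1 ∧ x0 ≠ q2 := by
        have := (Finset.mem_sdiff.mp hx0').2
        refine ⟨?_, ?_⟩ <;> · intro h; exact this (by simp [h])
      have hq1CA : q1 ∈ C \ A := by
        by_contra h
        have hsub : C \ A ⊆ insert q2 ((C \ A) \ ({q1, q2} : Finset ℕ)) := by
          intro a ha
          rw [Finset.mem_insert]
          by_cases h2 : a = q2
          · exact Or.inl h2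
          by_cases h1 : a = q1
          · exact absurd (h1 ▸ ha) h
          right
          rw [Finset.mem_sdiff]
          exact ⟨ha, by simp [h1, h2]⟩
        have := Finset.card_le_card hsub
        have := Finset.card_insert_le q2 ((C \ A) \ ({q1, q2} : Finset ℕ))
        omega
      have hq2CA : q2 ∈ C \ A := by
        by_contra h
        have hsub : C \ A ⊆ insert q1 ((C \ A) \ ({q1, q2} : Finset ℕ)) := by
          intro a ha
          rw [Finset.mem_insert]
          by_cases h1 : a = q1
          · exact Or.inl h1
          by_cases h2 : a = q2
          · exact absurd (h2 ▸ ha) h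
          right
          rw [Finset.mem_sdiff]
          exact ⟨ha, by simp [h1, h2]⟩
        have := Finset.card_le_card hsub
        have := Finset.card_insert_le q1 ((C \ A) \ ({q1, q2} : Finset ℕ))
        omega
      obtain ⟨hq1C, hq1p1, hq1p2⟩ := memCA q1 hq1CA
      obtain ⟨hq2C, hq2p1, hq2p2⟩ := memCA q2 hq2CA
      have hCAsub : C \ A ⊆ {x0, q1, q2} := by
        intro a ha
        simp only [Finset.mem_insert, Finset.mem_singleton]
        by_cases h1 : a = q1
        · tauto
        by_cases h2 : a = q2
        · tauto
        have ha' : a ∈ (C \ A) \ ({q1, q2} : Finset ℕ) := by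
          rw [Finset.mem_sdiff]
          exact ⟨ha, by simp [h1, h2]⟩
        left
        by_contra hne
        have hsub2 : ({a, x0} : Finset ℕ) ⊆ (C \ A) \ ({q1, q2} : Finset ℕ) := by
          intro t ht
          simp only [Finset.mem_insert, Finset.mem_singleton] at ht
          rcases ht with rfl | rfl
          exacts [ha', hx0']
        have := Finset.card_le_card hsub2
        rw [Finset.card_pair hne] at this
        omega
      rcases attemptY B D p1 p2 q1 q2 x0 hB hD hp hq with ⟨x, y, hxB, hyD, hxx0, hyx0, g⟩ | hf
      · exact finishY hp1A hp2A hq1E hq2E hx0C hx0p1 hx0p2 hx0q.1 hx0q.2 hxB hyD hxx0 hyx0 g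
      obtain ⟨hBD, hx0B, hBcard, hpq⟩ := hf
      rcases hpq with ⟨hp1B, hp2B⟩ | ⟨hq1B, hq2B⟩
      · -- B = D ∋ p1, p2, x0 : take (p1, q1, x0)
        refine ⟨p1, q1, x0, hp1B, hq1C, hBD ▸ hx0B, Ne.symm hq1p1, Ne.symm hx0p1,
          Ne.symm hx0q.1, ⟨p2, hp2A, Ne.symm hp, Ne.symm hq1p2, Ne.symm hx0p2⟩,
          ⟨q2, hq2E, hq2p1, Ne.symm hq, Ne.symm hx0q.2⟩⟩
      · -- B = D = {q1, q2, x0} : find w ∈ C ∩ A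
        have hBtriple : ({q1, q2, x0} : Finset ℕ).card = 3 := by
          rw [Finset.card_insert_of_notMem (by simp [hq, Ne.symm hx0q.1]),
            Finset.card_insert_of_notMem (by simp [Ne.symm hx0q.2]), Finset.card_singleton]
        have hBfull : B = {q1, q2, x0} := by
          refine (Finset.eq_of_subset_of_card_le ?_ (by omega)).symm
          intro a ha
          simp only [Finset.mem_insert, Finset.mem_singleton] at ha
          rcases ha with rfl | rfl | rfl
          exacts [hq1B, hq2B, hx0B]
        obtain ⟨w, hwU, hwS⟩ := exists_outside (B ∪ C ∪ D) {q1, q2, x0} hu (card_triple_le _ _ _)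
        have hwC : w ∈ C := by
          rcases Finset.mem_union.mp hwU with h | h
          · rcases Finset.mem_union.mp h with h | h
            · exact absurd (hBfull ▸ h) hwS
            · exact h
          · rw [← hBD, hBfull] at h
            exact absurd h hwS
        have hwq : w ≠ q1 ∧ w ≠ q2 ∧ w ≠ x0 := by
          refine ⟨?_, ?_, ?_⟩ <;> · intro h; exact hwS (by simp [h])
        have hwA : w ∈ A := by
          by_contra h
          have hw' : w ∈ C \ A := Finset.mem_sdiff.mpr ⟨hwC, h⟩
          have := hCAsub hw'
          simp only [Finset.mem_insert, Finset.mem_singleton] at this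
          tauto
        have hw12 : w = p1 ∨ w = p2 := by
          rw [hAeq] at hwA
          simpa using hwA
        refine ⟨x0, w, q1, hx0B, hwC, hBD ▸ hq1B, Ne.symm hwq.2.2, hx0q.1, hwq.1, ?_,
          ⟨q2, hq2E, Ne.symm hx0q.2, ?_, Ne.symm hq⟩⟩
        · rcases hw12 with rfl | rfl
          · exact ⟨p2, hp2A, Ne.symm hx0p2, Ne.symm hp, Ne.symm hq1p2⟩
          · exact ⟨p1, hp1A, Ne.symm hx0p1, hp, Ne.symm hq1p1⟩
        · rcases hw12 with rfl | rfl
          exacts [hq2p1, hq2p2]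
  -- ===== Case 1 : |A| ≥ 3 =====
  · obtain ⟨A', hA'sub, hA'card⟩ := Finset.exists_subset_card_eq hA3
    have hnsub : ¬ (B ∪ C ∪ D ⊆ A') := fun h => by
      have := Finset.card_le_card h; omega
    obtain ⟨z, hzU, hzA'⟩ := Finset.not_subset.mp hnsub
    rcases Finset.mem_union.mp hzU with hz' | hzD
    · rcases Finset.mem_union.mp hz' with hzB | hzC
      · obtain ⟨x2, x3, x4, m2, m3, m4, n1, n2, n3, hzT, hQ⟩ :=
          helperX B C D z q1 q2 hq hzB hC hD hu
        exact ⟨x2, x3, x4, m2, m3, m4, n1, n2, n3,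
          Awit hA'sub hA'card hzA' hzT, Ewit hq1E hq2E hQ⟩
      · have hu' : 4 ≤ (C ∪ B ∪ D).card := by
          rwa [show C ∪ B ∪ D = B ∪ C ∪ D from by
            ext a; simp only [Finset.mem_union]; tauto]
        obtain ⟨x2, x3, x4, m2, m3, m4, n1, n2, n3, hzT, hQ⟩ :=
          helperX C B D z q1 q2 hq hzC hB hD hu'
        exact ⟨x3, x2, x4, m3, m2, m4, Ne.symm n1, n3, n2,
          Awit hA'sub hA'card hzA' (by tauto),
          Ewit hq1E hq2E (by tauto)⟩
    · have hu' : 4 ≤ (D ∪ C ∪ B).card := by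
        rwa [show D ∪ C ∪ B = B ∪ C ∪ D from by
          ext a; simp only [Finset.mem_union]; tauto]
      obtain ⟨x2, x3, x4, m2, m3, m4, n1, n2, n3, hzT, hQ⟩ :=
        helperX D C B z q1 q2 hq hzD hC hB hu'
      exact ⟨x4, x3, x2, m4, m3, m2, Ne.symm n3, Ne.symm n2, Ne.symm n1,
        Awit hA'sub hA'card hzA' (by tauto),
        Ewit hq1E hq2E (by tauto)⟩

end Core



/-- The square of the "pendant 4-cycle" graph `H` with vertices `v₁,…,v₅`
(indexed `0,…,4`), where `H` consists of the 4-cycle `v₁ v₂ v₄ v₃` together with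
the pendant edge `v₄ v₅`.  In `H²` every pair of distinct vertices is adjacent
except `{v₁, v₅}`, i.e. `H² = K₅` minus the edge `v₁ v₅`. -/
def PendantSq : SimpleGraph (Fin 5) where
  Adj i j := i ≠ j ∧ ¬(i = 0 ∧ j = 4) ∧ ¬(i = 4 ∧ j = 0)
  symm := ⟨by intro i j h; revert i j h; decide⟩
  loopless := ⟨fun i h => h.1 rfl⟩

/-- List coloring of the square of the pendant-4-cycle graph: if `|L(v₁)| ≥ 2`,
`|L(v₅)| ≥ 2`, `|L(vᵢ)| ≥ 3` for `i ∈ {2,3,4}`, `|L(v₂) ∪ L(v₃) ∪ L(v₄)| ≥ 4`, and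
moreover `|L(v₁)| ≥ 3` or `|L(v₁) ∪ L(v₃)| ≥ 5`, then `H²` has a proper coloring
from the lists. -/
theorem pendantSq_colorable_of_lists (L : Fin 5 → Finset ℕ)
    (h1 : 2 ≤ (L 0).card) (h5 : 2 ≤ (L 4).card)
    (h2 : 3 ≤ (L 1).card) (h3 : 3 ≤ (L 2).card) (h4 : 3 ≤ (L 3).card)
    (hu : 4 ≤ (L 1 ∪ L 2 ∪ L 3).card)
    (hextra : 3 ≤ (L 0).card ∨ 5 ≤ (L 0 ∪ L 2).card) :
    ∃ c : Fin 5 → ℕ, (∀ i, c i ∈ L i) ∧ ∀ i j, PendantSq.Adj i j → c i ≠ c j := by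
  obtain ⟨x2, x3, x4, m2, m3, m4, n23, n24, n34, ⟨a, haL, ha2, ha3, ha4⟩, ⟨e, heL, he2, he3, he4⟩⟩ :=
    core (L 0) (L 1) (L 2) (L 3) (L 4) h1 h5 h2 h3 h4 hu hextra
  refine ⟨![a, x2, x3, x4, e], ?_, ?_⟩
  · intro i
    fin_cases i <;> simpa
  · intro i j hij
    obtain ⟨hne, h04, h40⟩ := hij
    fin_cases i <;> fin_cases j <;> simp_all <;> omega
end

section
/- Consider the graph J consisting of a path of two 4-cycles joined by a path: vertices v₁,…,v₈ with 4-cycle v₁v₂v₄v₃ (edges v₁v₂, v₁v₃, v₂v₄, v₃v₄), edge v₄v₅, and 4-cycle v₅v₆v₇v₈ (edges v₅v₆, v₆v₇, v₇v₈, v₈v₅). If each vertex vᵢ has a list L(vᵢ) with |L(vᵢ)| = 3 for i ∈ {1,2,3,6,8}, |L(v₄)| = |L(v₅)| = 5, and |L(v₇)| = 2, then the square J² admits a proper coloring from the lists. -/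
/-- The square of a graph: two distinct vertices are adjacent iff their
distance in `G` is at most 2. -/
def square {V : Type} (G : SimpleGraph V) : SimpleGraph V where
  Adj u v := u ≠ v ∧ (G.Adj u v ∨ ∃ w, G.Adj u w ∧ G.Adj w v)
  symm := by
    constructor
    rintro u v ⟨h1, h2⟩
    refine ⟨h1.symm, ?_⟩
    rcases h2 with h | ⟨w, hw1, hw2⟩
    · exact Or.inl h.symm
    · exact Or.inr ⟨w, hw2.symm, hw1.symm⟩
  loopless := ⟨fun v h => h.1 rfl⟩

/-- The graph `J` on vertices `v₁,…,v₈` (indexed `0,…,7`) consisting of the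
4-cycle `v₁ v₂ v₄ v₃` (edges `v₁v₂, v₁v₃, v₂v₄, v₃v₄`), the edge `v₄v₅`, and the
4-cycle `v₅ v₆ v₇ v₈` (edges `v₅v₆, v₆v₇, v₇v₈, v₈v₅`). -/
def Jgraph : SimpleGraph (Fin 8) :=
  SimpleGraph.fromEdgeSet
    ({s(0, 1), s(0, 2), s(1, 3), s(2, 3), s(3, 4), s(4, 5), s(5, 6), s(6, 7), s(7, 4)} :
      Set (Sym2 (Fin 8)))

instance instJ : DecidableRel Jgraph.Adj := fun u v =>
  decidable_of_iff
    ((s(u,v) = s(0,1) ∨ s(u,v) = s(0,2) ∨ s(u,v) = s(1,3) ∨ s(u,v) = s(2,3) ∨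
      s(u,v) = s(3,4) ∨ s(u,v) = s(4,5) ∨ s(u,v) = s(5,6) ∨ s(u,v) = s(6,7) ∨
      s(u,v) = s(7,4)) ∧ u ≠ v)
    (by
      rw [Jgraph, SimpleGraph.fromEdgeSet_adj]
      simp only [Set.mem_insert_iff, Set.mem_singleton_iff])

instance instSq (u v : Fin 8) : Decidable ((square Jgraph).Adj u v) :=
  inferInstanceAs (Decidable (u ≠ v ∧ (Jgraph.Adj u v ∨ ∃ w, Jgraph.Adj u w ∧ Jgraph.Adj w v)))

set_option synthInstance.maxSize 10000 in
set_option maxHeartbeats 1000000 in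
lemma sq_pairs : ∀ u v : Fin 8, (square Jgraph).Adj u v →
    (u = 0 ∧ v = 1) ∨ (u = 1 ∧ v = 0) ∨
    (u = 0 ∧ v = 2) ∨ (u = 2 ∧ v = 0) ∨
    (u = 0 ∧ v = 3) ∨ (u = 3 ∧ v = 0) ∨
    (u = 1 ∧ v = 2) ∨ (u = 2 ∧ v = 1) ∨
    (u = 1 ∧ v = 3) ∨ (u = 3 ∧ v = 1) ∨
    (u = 1 ∧ v = 4) ∨ (u = 4 ∧ v = 1) ∨
    (u = 2 ∧ v = 3) ∨ (u = 3 ∧ v = 2) ∨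
    (u = 2 ∧ v = 4) ∨ (u = 4 ∧ v = 2) ∨
    (u = 3 ∧ v = 4) ∨ (u = 4 ∧ v = 3) ∨
    (u = 3 ∧ v = 5) ∨ (u = 5 ∧ v = 3) ∨
    (u = 3 ∧ v = 7) ∨ (u = 7 ∧ v = 3) ∨
    (u = 4 ∧ v = 5) ∨ (u = 5 ∧ v = 4) ∨
    (u = 4 ∧ v = 6) ∨ (u = 6 ∧ v = 4) ∨
    (u = 4 ∧ v = 7) ∨ (u = 7 ∧ v = 4) ∨
    (u = 5 ∧ v = 6) ∨ (u = 6 ∧ v = 5) ∨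
    (u = 5 ∧ v = 7) ∨ (u = 7 ∧ v = 5) ∨
    (u = 6 ∧ v = 7) ∨ (u = 7 ∧ v = 6) := by decide

lemma pick_out (A B : Finset ℕ) (h : A.card < B.card) : ∃ x ∈ B, x ∉ A := by
  by_contra hc
  push_neg at hc
  exact absurd (Finset.card_le_card hc) (not_le.mpr h)

lemma hall3 (S0 S1 S2 : Finset ℕ) (h0 : S0.Nonempty) (h1 : S1.Nonempty) (h2 : S2.Nonempty)
    (p01 : 2 ≤ (S0 ∪ S1).card) (p02 : 2 ≤ (S0 ∪ S2).card) (p12 : 2 ≤ (S1 ∪ S2).card)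
    (ptr : 3 ≤ (S0 ∪ S1 ∪ S2).card) :
    ∃ x0 ∈ S0, ∃ x1 ∈ S1, ∃ x2 ∈ S2, x0 ≠ x1 ∧ x0 ≠ x2 ∧ x1 ≠ x2 := by
  -- first get x1 ∈ S1, x2 ∈ S2 with x1 ≠ x2
  obtain ⟨x1, hx1, x2, hx2, h12⟩ :
      ∃ x1 ∈ S1, ∃ x2 ∈ S2, x1 ≠ x2 := by
    obtain ⟨u, hu⟩ := h1
    by_cases hc : ∃ y ∈ S2, y ≠ u
    · obtain ⟨y, hy, hyu⟩ := hc
      exact ⟨u, hu, y, hy, (Ne.symm hyu)⟩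
    · push_neg at hc
      -- S2 = {u}
      obtain ⟨w, hw⟩ := h2
      have hwu : w = u := hc w hw
      subst hwu
      -- find u' ∈ S1 with u' ≠ w
      have hcard : 1 < S1.card := by
        by_contra hle
        push_neg at hle
        interval_cases h : S1.card
        · exact absurd h (Finset.card_ne_zero_of_mem hu)
        · obtain ⟨z, hz⟩ := Finset.card_eq_one.mp h
          have hS2 : S2 ⊆ {w} := fun y hy => Finset.mem_singleton.mpr (hc y hy)
          have : S1 ∪ S2 ⊆ {z} ∪ {w} := Finset.union_subset_union (by rw [hz]) hS2
          have hzw : z = w := by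
            have := hz ▸ hu; simp at this; omega
          rw [hzw] at this
          have := Finset.card_le_card this
          simp at this
          omega
      obtain ⟨u', hu', hne⟩ := Finset.exists_mem_ne hcard w
      exact ⟨u', hu', w, hw, hne⟩
  by_cases h0' : ∃ z ∈ S0, z ≠ x1 ∧ z ≠ x2
  · obtain ⟨z, hz, hz1, hz2⟩ := h0'
    exact ⟨z, hz, x1, hx1, x2, hx2, hz1, hz2, h12⟩
  push_neg at h0'
  have hS0sub : S0 ⊆ {x1, x2} := by
    intro z hz
    by_cases hz1 : z = x1
    · simp [hz1]
    · simp [h0' z hz hz1]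
  obtain ⟨w, hw, hwmem⟩ := pick_out {x1, x2} (S0 ∪ S1 ∪ S2) (by
    have : ({x1, x2} : Finset ℕ).card ≤ 2 := Finset.card_insert_le _ _ |>.trans (by simp)
    omega)
  have hw1 : w ≠ x1 := fun e => hwmem (by simp [e])
  have hw2 : w ≠ x2 := fun e => hwmem (by simp [e])
  have hwS0 : w ∉ S0 := fun hws => hwmem (hS0sub hws)
  have hw12 : w ∈ S1 ∨ w ∈ S2 := by
    rcases Finset.mem_union.mp hw with hh | hh
    · rcases Finset.mem_union.mp hh with hh' | hh'
      · exact absurd hh' hwS0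
      · exact Or.inl hh'
    · exact Or.inr hh
  rcases hw12 with hwS1 | hwS2
  · -- try (x0, w, x2)
    by_cases hx0' : ∃ z ∈ S0, z ≠ x2
    · obtain ⟨z, hz, hzx2⟩ := hx0'
      have hzw : z ≠ w := fun e => hwS0 (e ▸ hz)
      exact ⟨z, hz, w, hwS1, x2, hx2, hzw, hzx2, hw2⟩
    · push_neg at hx0'
      -- S0 = {x2}
      have hx2S0 : x2 ∈ S0 := by
        obtain ⟨z, hz⟩ := h0
        have := hx0' z hz
        rwa [this] at hz
      have hS2card : 2 ≤ S2.card := by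
        have hsub : S0 ∪ S2 ⊆ S2 := by
          intro z hz
          rcases Finset.mem_union.mp hz with hh | hh
          · rw [hx0' z hh]; exact hx2
          · exact hh
        exact le_trans p02 (Finset.card_le_card hsub)
      obtain ⟨y2, hy2, hy2x2⟩ := Finset.exists_mem_ne (s := S2) (by omega) x2
      by_cases hwy2 : w = y2
      · -- use (x2, x1, w) with w = y2 ∈ S2
        exact ⟨x2, hx2S0, x1, hx1, y2, hy2, Ne.symm h12, Ne.symm hy2x2,
          fun e => hw1 (hwy2 ▸ e.symm)⟩
      · exact ⟨x2, hx2S0, w, hwS1, y2, hy2, Ne.symm hw2, Ne.symm hy2x2,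
          fun e => hwy2 e⟩
  · -- w ∈ S2, try (x0, x1, w)
    by_cases hx0' : ∃ z ∈ S0, z ≠ x1
    · obtain ⟨z, hz, hzx1⟩ := hx0'
      have hzw : z ≠ w := fun e => hwS0 (e ▸ hz)
      exact ⟨z, hz, x1, hx1, w, hwS2, hzx1, hzw, Ne.symm hw1⟩
    · push_neg at hx0'
      have hx1S0 : x1 ∈ S0 := by
        obtain ⟨z, hz⟩ := h0
        have := hx0' z hz
        rwa [this] at hz
      have hS1card : 2 ≤ S1.card := by
        have hsub : S0 ∪ S1 ⊆ S1 := by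
          intro z hz
          rcases Finset.mem_union.mp hz with hh | hh
          · rw [hx0' z hh]; exact hx1
          · exact hh
        exact le_trans p01 (Finset.card_le_card hsub)
      obtain ⟨y1, hy1, hy1x1⟩ := Finset.exists_mem_ne (s := S1) (by omega) x1
      by_cases hwy1 : y1 = w
      · -- (x1, w(∈S1 via y1), x2)
        exact ⟨x1, hx1S0, y1, hy1, x2, hx2, Ne.symm hy1x1, h12,
          fun e => hw2 (hwy1 ▸ e)⟩
      · exact ⟨x1, hx1S0, y1, hy1, w, hwS2, Ne.symm hy1x1, Ne.symm hw1, hwy1⟩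

lemma hW_of_two (f g h : Finset ℕ) (hf : 3 ≤ (f ∪ h).card) (hg : g.card = 2)
    (s1 s2 : ℕ) (hne : s1 ≠ s2) :
    ¬ (f ∪ h ⊆ g ∪ {s1}) ∨ ¬ (f ∪ h ⊆ g ∪ {s2}) := by
  by_contra hc
  push_neg at hc
  obtain ⟨c1, c2⟩ := hc
  have : f ∪ h ⊆ g := by
    intro x hx
    have h1 := c1 hx
    have h2 := c2 hx
    rcases Finset.mem_union.mp h1 with h1' | h1'
    · exact h1'
    rcases Finset.mem_union.mp h2 with h2' | h2'
    · exact h2'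
    exact absurd ((Finset.mem_singleton.mp h1').symm.trans (Finset.mem_singleton.mp h2')) hne
  have := Finset.card_le_card this
  omega

lemma right_step (E f g h : Finset ℕ) (hE : E.card = 5) (hf : f.card = 3) (hg : g.card = 2)
    (hh : h.card = 3) (s : ℕ) (hw : ¬ (f ∪ h ⊆ g ∪ {s})) :
    ∃ x4 x5 x6 x7 : ℕ, x4 ∈ E ∧ x5 ∈ f ∧ x6 ∈ g ∧ x7 ∈ h ∧ x4 ≠ s ∧ x5 ≠ s ∧ x7 ≠ s ∧
      x4 ≠ x5 ∧ x4 ≠ x6 ∧ x4 ≠ x7 ∧ x5 ≠ x6 ∧ x5 ≠ x7 ∧ x6 ≠ x7 := by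
  obtain ⟨w, hwmem, hwout⟩ := Finset.not_subset.mp hw
  have hwg : w ∉ g := fun e => hwout (Finset.mem_union_left _ e)
  have hws : w ≠ s := fun e => hwout (Finset.mem_union_right _ (by simp [e]))
  have hfe : 2 ≤ (f.erase s).card := by
    have := Finset.pred_card_le_card_erase (s := f) (a := s); omega
  have hhe : 2 ≤ (h.erase s).card := by
    have := Finset.pred_card_le_card_erase (s := h) (a := s); omega
  have hwin : w ∈ f.erase s ∪ h.erase s := by
    rcases Finset.mem_union.mp hwmem with h' | h'
    · exact Finset.mem_union_left _ (Finset.mem_erase.mpr ⟨hws, h'⟩)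
    · exact Finset.mem_union_right _ (Finset.mem_erase.mpr ⟨hws, h'⟩)
  have ptr : 3 ≤ (f.erase s ∪ g ∪ h.erase s).card := by
    have hsub : insert w g ⊆ f.erase s ∪ g ∪ h.erase s := by
      intro x hx
      rcases Finset.mem_insert.mp hx with e | hxg
      · subst e
        rcases Finset.mem_union.mp hwin with h' | h'
        · exact Finset.mem_union_left _ (Finset.mem_union_left _ h')
        · exact Finset.mem_union_right _ h'
      · exact Finset.mem_union_left _ (Finset.mem_union_right _ hxg)
    have : (insert w g).card = 3 := by rw [Finset.card_insert_of_notMem hwg, hg]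
    have := Finset.card_le_card hsub
    omega
  obtain ⟨x5, hx5, x6, hx6, x7, hx7, d56, d57, d67⟩ :=
    hall3 (f.erase s) g (h.erase s)
      (Finset.card_pos.mp (by omega)) (Finset.card_pos.mp (by omega))
      (Finset.card_pos.mp (by omega))
      (le_trans (by omega) (Finset.card_le_card Finset.subset_union_left))
      (le_trans hfe (Finset.card_le_card Finset.subset_union_left))
      (le_trans (by omega : 2 ≤ g.card) (Finset.card_le_card Finset.subset_union_left)) ptr
  obtain ⟨hx5s, hx5f⟩ := Finset.mem_erase.mp hx5
  obtain ⟨hx7s, hx7h⟩ := Finset.mem_erase.mp hx7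
  obtain ⟨x4, hx4, hx4out⟩ := pick_out {s, x5, x6, x7} E (by
    have : ({s, x5, x6, x7} : Finset ℕ).card ≤ 4 := by
      apply le_trans (Finset.card_insert_le _ _)
      have : ({x5, x6, x7} : Finset ℕ).card ≤ 3 := by
        apply le_trans (Finset.card_insert_le _ _)
        apply Nat.succ_le_succ
        apply le_trans (Finset.card_insert_le _ _)
        simp
      omega
    omega)
  have h4s : x4 ≠ s := fun e => hx4out (by simp [e])
  have h45 : x4 ≠ x5 := fun e => hx4out (by simp [e])
  have h46 : x4 ≠ x6 := fun e => hx4out (by simp [e])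
  have h47 : x4 ≠ x7 := fun e => hx4out (by simp [e])
  exact ⟨x4, x5, x6, x7, hx4, hx5f, hx6, hx7h, h4s, hx5s, hx7s, h45, h46, h47, d56, d57, d67⟩

lemma left_step (a b c : Finset ℕ) (ha : a.card = 3) (hb : b.card = 3) (hc : c.card = 3)
    (s t : ℕ)
    (h2 : 2 ≤ ((b \ {s, t}) ∪ (c \ {s, t})).card)
    (h3 : 3 ≤ ((a.erase s) ∪ (b \ {s, t}) ∪ (c \ {s, t})).card) :
    ∃ x0 x1 x2 : ℕ, x0 ∈ a ∧ x1 ∈ b ∧ x2 ∈ c ∧ x0 ≠ s ∧ x1 ≠ s ∧ x1 ≠ t ∧ x2 ≠ s ∧ x2 ≠ t ∧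
      x0 ≠ x1 ∧ x0 ≠ x2 ∧ x1 ≠ x2 := by
  have hst : ({s, t} : Finset ℕ).card ≤ 2 := by
    apply le_trans (Finset.card_insert_le _ _); simp
  have hbs : 1 ≤ (b \ {s, t}).card := by
    have := Finset.le_card_sdiff ({s, t} : Finset ℕ) b; omega
  have hcs : 1 ≤ (c \ {s, t}).card := by
    have := Finset.le_card_sdiff ({s, t} : Finset ℕ) c; omega
  have hae : 2 ≤ (a.erase s).card := by
    have := Finset.pred_card_le_card_erase (s := a) (a := s); omega
  obtain ⟨x0, hx0, x1, hx1, x2, hx2, d01, d02, d12⟩ :=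
    hall3 (a.erase s) (b \ {s, t}) (c \ {s, t})
      (Finset.card_pos.mp (by omega)) (Finset.card_pos.mp (by omega))
      (Finset.card_pos.mp (by omega))
      (le_trans hae (Finset.card_le_card Finset.subset_union_left))
      (le_trans hae (Finset.card_le_card Finset.subset_union_left)) h2 h3
  obtain ⟨hx0s, hx0a⟩ := Finset.mem_erase.mp hx0
  obtain ⟨hx1b, hx1o⟩ := Finset.mem_sdiff.mp hx1
  obtain ⟨hx2c, hx2o⟩ := Finset.mem_sdiff.mp hx2
  simp only [Finset.mem_insert, Finset.mem_singleton, not_or] at hx1o hx2o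
  exact ⟨x0, x1, x2, hx0a, hx1b, hx2c, hx0s, hx1o.1, hx1o.2, hx2o.1, hx2o.2, d01, d02, d12⟩

/-- The conclusion: a system of distinct-where-needed representatives. -/
def Conc (a b c D E f g h : Finset ℕ) : Prop :=
  ∃ x0 x1 x2 x3 x4 x5 x6 x7 : ℕ,
    x0 ∈ a ∧ x1 ∈ b ∧ x2 ∈ c ∧ x3 ∈ D ∧ x4 ∈ E ∧ x5 ∈ f ∧ x6 ∈ g ∧ x7 ∈ h ∧
    x0 ≠ x1 ∧ x0 ≠ x2 ∧ x0 ≠ x3 ∧ x1 ≠ x2 ∧ x1 ≠ x3 ∧ x1 ≠ x4 ∧ x2 ≠ x3 ∧ x2 ≠ x4 ∧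
    x3 ≠ x4 ∧ x3 ≠ x5 ∧ x3 ≠ x7 ∧ x4 ≠ x5 ∧ x4 ≠ x6 ∧ x4 ≠ x7 ∧ x5 ≠ x6 ∧ x5 ≠ x7 ∧ x6 ≠ x7

lemma leaf_main (a b c D E f g h : Finset ℕ)
    (ha : a.card = 3) (hb : b.card = 3) (hc : c.card = 3)
    (hE : E.card = 5) (hf : f.card = 3) (hg : g.card = 2) (hh : h.card = 3)
    (s : ℕ) (hsD : s ∈ D) (hw : ¬ (f ∪ h ⊆ g ∪ {s}))
    (hleft : ∀ t : ℕ, t ≠ s →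
      2 ≤ ((b \ {s, t}) ∪ (c \ {s, t})).card ∧
      3 ≤ ((a.erase s) ∪ (b \ {s, t}) ∪ (c \ {s, t})).card) :
    Conc a b c D E f g h := by
  obtain ⟨t, c5, c6, c7, htE, h5f, h6g, h7h, h4s, h5s, h7s, h45, h46, h47, h56, h57, h67⟩ :=
    right_step E f g h hE hf hg hh s hw
  obtain ⟨hl2, hl3⟩ := hleft t h4s
  obtain ⟨y0, y1, y2, m0, m1, m2, h0s, h1s, h1t, h2s, h2t, d01, d02, d12⟩ :=
    left_step a b c ha hb hc s t hl2 hl3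
  exact ⟨y0, y1, y2, s, t, c5, c6, c7, m0, m1, m2, hsD, htE, h5f, h6g, h7h,
    d01, d02, h0s, d12, h1s, h1t, h2s, h2t,
    Ne.symm h4s, Ne.symm h5s, Ne.symm h7s, h45, h46, h47, h56, h57, h67⟩

lemma rigid_case (a b D E f g h : Finset ℕ)
    (ha : a.card = 3) (hb : b.card = 3) (hD : D.card = 5) (hE : E.card = 5)
    (hf : f.card = 3) (hg : g.card = 2) (hh : h.card = 3)
    (q : ℕ) (hqb : q ∈ b) (hqa : q ∉ a) (hba1 : (b \ a).card = 1)
    (hab4 : (a ∪ b).card = 4)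
    (v : ℕ) (hvD : v ∈ D) (hva : v ∉ a) (hvb : v ∉ b)
    (hDab1 : (D \ (a ∪ b)).card = 1) (hveq : D \ (a ∪ b) = {v})
    (hv : f ∪ h ⊆ g ∪ {v}) :
    Conc a b b D E f g h := by
  -- structure of f, g, h
  have hvg : v ∉ g := by
    intro hvg
    have hfg : f ⊆ g := by
      intro x hx
      have hx' := hv (Finset.mem_union_left _ hx)
      rcases Finset.mem_union.mp hx' with h' | h'
      · exact h'
      · rw [Finset.mem_singleton.mp h']; exact hvg
    have := Finset.card_le_card hfg
    omega
  have hfeq : f = g ∪ {v} := by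
    apply Finset.eq_of_subset_of_card_le
    · exact fun x hx => hv (Finset.mem_union_left _ hx)
    · have h1 := Finset.card_union_le g ({v} : Finset ℕ)
      simp only [Finset.card_singleton] at h1
      omega
  have hheq : h = g ∪ {v} := by
    apply Finset.eq_of_subset_of_card_le
    · exact fun x hx => hv (Finset.mem_union_right _ hx)
    · have h1 := Finset.card_union_le g ({v} : Finset ℕ)
      simp only [Finset.card_singleton] at h1
      omega
  obtain ⟨g1, g2, hg12, hgeq⟩ := Finset.card_eq_two.mp hg
  have hg1g : g1 ∈ g := by rw [hgeq]; simp
  have hg2g : g2 ∈ g := by rw [hgeq]; simp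
  have hvf : v ∈ f := by rw [hfeq]; simp
  have hg1f : g1 ∈ f := by rw [hfeq]; exact Finset.mem_union_left _ hg1g
  have hg2f : g2 ∈ f := by rw [hfeq]; exact Finset.mem_union_left _ hg2g
  have hvh : v ∈ h := by rw [hheq]; simp
  have hg1h : g1 ∈ h := by rw [hheq]; exact Finset.mem_union_left _ hg1g
  have hg2h : g2 ∈ h := by rw [hheq]; exact Finset.mem_union_left _ hg2g
  have hvg1 : v ≠ g1 := fun e => hvg (e ▸ hg1g)
  have hvg2 : v ≠ g2 := fun e => hvg (e ▸ hg2g)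
  -- p : the unique element of a \ b
  have hab1 : (a \ b).card = 1 := by
    have h1 := Finset.card_sdiff_add_card_inter a b
    have h2 := Finset.card_sdiff_add_card_inter b a
    rw [Finset.inter_comm b a] at h2
    omega
  obtain ⟨p, hpeq⟩ := Finset.card_eq_one.mp hab1
  have hpmem : p ∈ a \ b := by rw [hpeq]; exact Finset.mem_singleton_self p
  obtain ⟨hpa, hpb⟩ := Finset.mem_sdiff.mp hpmem
  -- D = a ∪ b ∪ {v}
  have hDsub : D ⊆ a ∪ b ∪ {v} := by
    intro x hx
    by_cases hxab : x ∈ a ∪ b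
    · exact Finset.mem_union_left _ hxab
    · have : x ∈ D \ (a ∪ b) := Finset.mem_sdiff.mpr ⟨hx, hxab⟩
      rw [hveq] at this
      exact Finset.mem_union_right _ this
  have haD : a ⊆ D := by
    have hDeq : D = a ∪ b ∪ {v} := by
      apply Finset.eq_of_subset_of_card_le hDsub
      have h1 := Finset.card_union_le (a ∪ b) ({v} : Finset ℕ)
      simp only [Finset.card_singleton] at h1
      omega
    rw [hDeq]
    exact fun x hx => Finset.mem_union_left _ (Finset.mem_union_left _ hx)
  have hbD : b ⊆ D := by
    have hDeq : D = a ∪ b ∪ {v} := by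
      apply Finset.eq_of_subset_of_card_le hDsub
      have h1 := Finset.card_union_le (a ∪ b) ({v} : Finset ℕ)
      simp only [Finset.card_singleton] at h1
      omega
    rw [hDeq]
    exact fun x hx => Finset.mem_union_left _ (Finset.mem_union_right _ hx)
  have hpq : p ≠ q := fun e => hqa (e ▸ hpa)
  have hpv : p ≠ v := fun e => hva (e ▸ hpa)
  have hqv : q ≠ v := fun e => hvb (e ▸ hqb)
  by_cases hEt : ∃ t ∈ E, t ∉ f ∧ t ∉ g ∧ t ≠ p ∧ t ≠ q
  · obtain ⟨t, htE, htf, htg, htp, htq⟩ := hEt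
    -- left step with s := p
    have herase : b.erase t ⊆ b \ {p, t} := by
      intro x hx
      obtain ⟨hxt, hxb⟩ := Finset.mem_erase.mp hx
      refine Finset.mem_sdiff.mpr ⟨hxb, ?_⟩
      simp only [Finset.mem_insert, Finset.mem_singleton, not_or]
      exact ⟨fun e => hpb (e ▸ hxb), hxt⟩
    have hl2 : 2 ≤ ((b \ {p, t}) ∪ (b \ {p, t})).card := by
      rw [Finset.union_self]
      have h1 := Finset.card_le_card herase
      have h2 := Finset.pred_card_le_card_erase (s := b) (a := t)
      omega
    have hl3 : 3 ≤ ((a.erase p) ∪ (b \ {p, t}) ∪ (b \ {p, t})).card := by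
      have hqmem2 : q ∈ b \ {p, t} := by
        refine Finset.mem_sdiff.mpr ⟨hqb, ?_⟩
        simp only [Finset.mem_insert, Finset.mem_singleton, not_or]
        exact ⟨Ne.symm hpq, Ne.symm htq⟩
      have hsub : insert q (a.erase p) ⊆ (a.erase p) ∪ (b \ {p, t}) ∪ (b \ {p, t}) := by
        intro z hz
        rcases Finset.mem_insert.mp hz with e | hz'
        · subst e
          exact Finset.mem_union_left _ (Finset.mem_union_right _ hqmem2)
        · exact Finset.mem_union_left _ (Finset.mem_union_left _ hz')
      have hqe : q ∉ a.erase p := fun hmem => hqa (Finset.mem_of_mem_erase hmem)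
      have hcard : (insert q (a.erase p)).card = (a.erase p).card + 1 :=
        Finset.card_insert_of_notMem hqe
      have h1 := Finset.card_le_card hsub
      have h2 : (a.erase p).card = 2 := by
        rw [Finset.card_erase_of_mem hpa, ha]
      omega
    obtain ⟨y0, y1, y2, m0, m1, m2, h0s, h1s, h1t, h2s, h2t, d01, d02, d12⟩ :=
      left_step a b b ha hb hb p t hl2 hl3
    have hx45 : t ≠ v := fun e => htf (e ▸ hvf)
    have hx46 : t ≠ g1 := fun e => htg (e ▸ hg1g)
    have hx46' : t ≠ g2 := fun e => htg (e ▸ hg2g)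
    by_cases hpf : p ∈ f
    · have hpg : p ∈ g := by
        rw [hfeq] at hpf
        rcases Finset.mem_union.mp hpf with h' | h'
        · exact h'
        · exact absurd (Finset.mem_singleton.mp h') hpv
      rw [hgeq] at hpg
      rcases Finset.mem_insert.mp hpg with e | e
      · -- p = g1 : use x5 := v, x6 := g1, x7 := g2
        refine ⟨y0, y1, y2, p, t, v, g1, g2, m0, m1, m2, haD hpa, htE, hvf, hg1g, hg2h,
          d01, d02, h0s, d12, h1s, h1t, h2s, h2t,
          Ne.symm htp, hpv, ?_, hx45, hx46, hx46', hvg1, hvg2, hg12⟩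
        rw [e]; exact hg12
      · have e' := Finset.mem_singleton.mp e
        -- p = g2 : use x5 := v, x6 := g2, x7 := g1
        refine ⟨y0, y1, y2, p, t, v, g2, g1, m0, m1, m2, haD hpa, htE, hvf, hg2g, hg1h,
          d01, d02, h0s, d12, h1s, h1t, h2s, h2t,
          Ne.symm htp, hpv, ?_, hx45, hx46', hx46, hvg2, hvg1,
          Ne.symm hg12⟩
        rw [e']; exact Ne.symm hg12
    · -- p ∉ f : x5 := v, x6 := g2, x7 := g1
      have hpg1 : p ≠ g1 := fun e => hpf (e ▸ hg1f)
      refine ⟨y0, y1, y2, p, t, v, g2, g1, m0, m1, m2, haD hpa, htE, hvf, hg2g, hg1h,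
        d01, d02, h0s, d12, h1s, h1t, h2s, h2t,
        Ne.symm htp, hpv, hpg1, hx45, hx46', hx46, hvg2, hvg1,
        Ne.symm hg12⟩
  · push_neg at hEt
    have hgf : g ⊆ f := by rw [hfeq]; exact Finset.subset_union_left
    have hEsub : E ⊆ insert p (insert q f) := by
      intro t ht
      by_cases h1 : t ∈ f
      · exact Finset.mem_insert_of_mem (Finset.mem_insert_of_mem h1)
      · by_cases h3 : t = p
        · rw [h3]; exact Finset.mem_insert_self _ _
        · have := hEt t ht h1 (fun hgm => h1 (hgf hgm)) h3
          rw [this]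
          exact Finset.mem_insert_of_mem (Finset.mem_insert_self _ _)
    have h5le : 5 ≤ (insert p (insert q f)).card := by
      have := Finset.card_le_card hEsub
      omega
    have hqf : q ∉ f := by
      intro hqf
      have : insert q f = f := Finset.insert_eq_self.mpr hqf
      rw [this] at h5le
      have := Finset.card_insert_le p f
      omega
    have hpf : p ∉ f := by
      intro hpf
      have hcomm : insert p (insert q f) = insert q (insert p f) := Finset.insert_comm p q f
      rw [hcomm, Finset.insert_eq_self.mpr hpf] at h5le
      have := Finset.card_insert_le q f
      omega
    have hEeq : E = insert p (insert q f) := by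
      apply Finset.eq_of_subset_of_card_le hEsub
      have h1 := Finset.card_insert_le p (insert q f)
      have h2 := Finset.card_insert_le q f
      omega
    have hpE : p ∈ E := by rw [hEeq]; exact Finset.mem_insert_self _ _
    -- assignment s := q, t := p
    have herase : b.erase q ⊆ b \ {q, p} := by
      intro x hx
      obtain ⟨hxq, hxb⟩ := Finset.mem_erase.mp hx
      refine Finset.mem_sdiff.mpr ⟨hxb, ?_⟩
      simp only [Finset.mem_insert, Finset.mem_singleton, not_or]
      exact ⟨hxq, fun e => hpb (e ▸ hxb)⟩
    have hl2 : 2 ≤ ((b \ {q, p}) ∪ (b \ {q, p})).card := by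
      rw [Finset.union_self]
      have h1 := Finset.card_le_card herase
      have h2 := Finset.pred_card_le_card_erase (s := b) (a := q)
      omega
    have hl3 : 3 ≤ ((a.erase q) ∪ (b \ {q, p}) ∪ (b \ {q, p})).card := by
      have hea : a.erase q = a := Finset.erase_eq_of_notMem hqa
      calc (3 : ℕ) = (a.erase q).card := by rw [hea, ha]
        _ ≤ _ := Finset.card_le_card
          (Finset.subset_union_left.trans Finset.subset_union_left)
    obtain ⟨y0, y1, y2, m0, m1, m2, h0s, h1s, h1t, h2s, h2t, d01, d02, d12⟩ :=
      left_step a b b ha hb hb q p hl2 hl3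
    have hqg1 : q ≠ g1 := fun e => hqf (e ▸ hg1f)
    have hpg2 : p ≠ g2 := fun e => hpf (e ▸ hg2f)
    have hpg1 : p ≠ g1 := fun e => hpf (e ▸ hg1f)
    have hpv2 : p ≠ v := hpv
    exact ⟨y0, y1, y2, q, p, v, g2, g1, m0, m1, m2, hbD hqb, hpE, hvf, hg2g, hg1h,
      d01, d02, h0s, d12, h1s, h1t, h2s, h2t,
      Ne.symm hpq, hqv, hqg1, hpv, hpg2, hpg1, hvg2, hvg1,
      Ne.symm hg12⟩

lemma card_pair_le_s8 (s t : ℕ) : ({s, t} : Finset ℕ).card ≤ 2 := by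
  apply le_trans (Finset.card_insert_le _ _); simp

lemma main_lemma (a b c D E f g h : Finset ℕ)
    (ha : a.card = 3) (hb : b.card = 3) (hc : c.card = 3) (hD : D.card = 5)
    (hE : E.card = 5) (hf : f.card = 3) (hg : g.card = 2) (hh : h.card = 3) :
    Conc a b c D E f g h := by
  have hfh3 : 3 ≤ (f ∪ h).card :=
    le_trans (by omega) (Finset.card_le_card Finset.subset_union_left)
  have hDa2 : 2 ≤ (D \ a).card := by
    have := Finset.le_card_sdiff a D; omega
  by_cases hbc : b = c
  · subst hbc
    -- leaf usable whenever s ∈ D, s ∉ a, s ∉ b, s good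
    have leafL1 : ∀ s : ℕ, s ∈ D → s ∉ a → s ∉ b → ¬ (f ∪ h ⊆ g ∪ {s}) →
        Conc a b b D E f g h := by
      intro s hsD hsa hsb hw
      apply leaf_main a b b D E f g h ha hb hb hE hf hg hh s hsD hw
      intro t _
      have herase : b.erase t ⊆ b \ {s, t} := by
        intro x hx
        obtain ⟨hxt, hxb⟩ := Finset.mem_erase.mp hx
        refine Finset.mem_sdiff.mpr ⟨hxb, ?_⟩
        simp only [Finset.mem_insert, Finset.mem_singleton, not_or]
        exact ⟨fun e => hsb (e ▸ hxb), hxt⟩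
      have h2 : 2 ≤ ((b \ {s, t}) ∪ (b \ {s, t})).card := by
        rw [Finset.union_self]
        have h1 := Finset.card_le_card herase
        have h2 := Finset.pred_card_le_card_erase (s := b) (a := t)
        omega
      refine ⟨h2, ?_⟩
      have hea : a.erase s = a := Finset.erase_eq_of_notMem hsa
      calc (3 : ℕ) = (a.erase s).card := by rw [hea, ha]
        _ ≤ _ := Finset.card_le_card
          (Finset.subset_union_left.trans Finset.subset_union_left)
    by_cases hba2 : 2 ≤ (b \ a).card
    · -- L2 : s ∈ D \ b
      have hDb2 : 2 ≤ (D \ b).card := by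
        have := Finset.le_card_sdiff b D; omega
      obtain ⟨s1, hs1, s2, hs2, hs12⟩ := Finset.one_lt_card.mp (by omega : 1 < (D \ b).card)
      have leafL2 : ∀ s : ℕ, s ∈ D \ b → ¬ (f ∪ h ⊆ g ∪ {s}) → Conc a b b D E f g h := by
        intro s hs hw
        obtain ⟨hsD, hsb⟩ := Finset.mem_sdiff.mp hs
        apply leaf_main a b b D E f g h ha hb hb hE hf hg hh s hsD hw
        intro t _
        have herase : b.erase t ⊆ b \ {s, t} := by
          intro x hx
          obtain ⟨hxt, hxb⟩ := Finset.mem_erase.mp hx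
          refine Finset.mem_sdiff.mpr ⟨hxb, ?_⟩
          simp only [Finset.mem_insert, Finset.mem_singleton, not_or]
          exact ⟨fun e => hsb (e ▸ hxb), hxt⟩
        have h2 : 2 ≤ ((b \ {s, t}) ∪ (b \ {s, t})).card := by
          rw [Finset.union_self]
          have h1 := Finset.card_le_card herase
          have h2 := Finset.pred_card_le_card_erase (s := b) (a := t)
          omega
        refine ⟨h2, ?_⟩
        obtain ⟨x, hx, hxt⟩ := Finset.exists_mem_ne (s := b \ a) (by omega) t
        obtain ⟨hxb, hxa⟩ := Finset.mem_sdiff.mp hx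
        have hxs : x ≠ s := fun e => hsb (e ▸ hxb)
        have hsub : insert x (a.erase s) ⊆ (a.erase s) ∪ (b \ {s, t}) ∪ (b \ {s, t}) := by
          intro z hz
          rcases Finset.mem_insert.mp hz with e | hz'
          · subst e
            refine Finset.mem_union_left _ (Finset.mem_union_right _ ?_)
            refine Finset.mem_sdiff.mpr ⟨hxb, ?_⟩
            simp only [Finset.mem_insert, Finset.mem_singleton, not_or]
            exact ⟨hxs, hxt⟩
          · exact Finset.mem_union_left _ (Finset.mem_union_left _ hz')
        have hxe : x ∉ a.erase s := fun hmem => hxa (Finset.mem_of_mem_erase hmem)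
        have hcard : (insert x (a.erase s)).card = (a.erase s).card + 1 :=
          Finset.card_insert_of_notMem hxe
        have h1 := Finset.card_le_card hsub
        have h2 := Finset.pred_card_le_card_erase (s := a) (a := s)
        omega
      rcases hW_of_two f g h hfh3 hg s1 s2 hs12 with hw | hw
      · exact leafL2 s1 hs1 hw
      · exact leafL2 s2 hs2 hw
    · by_cases hbsub : b ⊆ a
      · have hbeqa : b = a := Finset.eq_of_subset_of_card_le hbsub (by omega)
        obtain ⟨s1, hs1, s2, hs2, hs12⟩ := Finset.one_lt_card.mp (by omega : 1 < (D \ a).card)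
        have g1 := Finset.mem_sdiff.mp hs1
        have g2 := Finset.mem_sdiff.mp hs2
        rcases hW_of_two f g h hfh3 hg s1 s2 hs12 with hw | hw
        · exact leafL1 s1 g1.1 g1.2 (hbeqa ▸ g1.2) hw
        · exact leafL1 s2 g2.1 g2.2 (hbeqa ▸ g2.2) hw
      · -- (b \ a).card = 1
        have hba1 : (b \ a).card = 1 := by
          have hne : (b \ a).Nonempty := Finset.sdiff_nonempty.mpr hbsub
          have := Finset.card_pos.mpr hne
          omega
        obtain ⟨q, hqeq⟩ := Finset.card_eq_one.mp hba1
        have hqmem : q ∈ b \ a := by rw [hqeq]; exact Finset.mem_singleton_self q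
        obtain ⟨hqb, hqa⟩ := Finset.mem_sdiff.mp hqmem
        have hab4 : (a ∪ b).card = 4 := by
          have h1 := Finset.card_sdiff_add_card_inter b a
          have h2 := Finset.card_union_add_card_inter a b
          rw [Finset.inter_comm b a] at h1
          omega
        by_cases hDab : 1 < (D \ (a ∪ b)).card
        · obtain ⟨s1, hs1, s2, hs2, hs12⟩ := Finset.one_lt_card.mp hDab
          have g1 := Finset.mem_sdiff.mp hs1
          have g2 := Finset.mem_sdiff.mp hs2
          rcases hW_of_two f g h hfh3 hg s1 s2 hs12 with hw | hw
          · exact leafL1 s1 g1.1 (fun e => g1.2 (Finset.mem_union_left _ e))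
              (fun e => g1.2 (Finset.mem_union_right _ e)) hw
          · exact leafL1 s2 g2.1 (fun e => g2.2 (Finset.mem_union_left _ e))
              (fun e => g2.2 (Finset.mem_union_right _ e)) hw
        · have hDab1 : (D \ (a ∪ b)).card = 1 := by
            have h1 := Finset.le_card_sdiff (a ∪ b) D
            omega
          obtain ⟨v, hveq⟩ := Finset.card_eq_one.mp hDab1
          have hvmem : v ∈ D \ (a ∪ b) := by rw [hveq]; exact Finset.mem_singleton_self v
          obtain ⟨hvD, hvab⟩ := Finset.mem_sdiff.mp hvmem
          have hva : v ∉ a := fun e => hvab (Finset.mem_union_left _ e)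
          have hvb : v ∉ b := fun e => hvab (Finset.mem_union_right _ e)
          by_cases hv : f ∪ h ⊆ g ∪ {v}
          · exact rigid_case a b D E f g h ha hb hD hE hf hg hh q hqb hqa hba1 hab4
              v hvD hva hvb hDab1 hveq hv
          · exact leafL1 v hvD hva hvb hv
  · -- b ≠ c
    have hbc4 : 4 ≤ (b ∪ c).card := by
      by_contra hle
      push_neg at hle
      have h1 : b = b ∪ c := Finset.eq_of_subset_of_card_le Finset.subset_union_left (by omega)
      have h2 : c = b ∪ c := Finset.eq_of_subset_of_card_le Finset.subset_union_right (by omega)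
      exact hbc (h1.trans h2.symm)
    obtain ⟨s1, hs1, s2, hs2, hs12⟩ := Finset.one_lt_card.mp (by omega : 1 < (D \ a).card)
    have leaf : ∀ s : ℕ, s ∈ D \ a → ¬ (f ∪ h ⊆ g ∪ {s}) → Conc a b c D E f g h := by
      intro s hs hw
      obtain ⟨hsD, hsa⟩ := Finset.mem_sdiff.mp hs
      apply leaf_main a b c D E f g h ha hb hc hE hf hg hh s hsD hw
      intro t _
      constructor
      · rw [← Finset.union_sdiff_distrib]
        have h1 := Finset.le_card_sdiff ({s, t} : Finset ℕ) (b ∪ c)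
        have h2 := card_pair_le_s8 s t
        omega
      · have hea : a.erase s = a := Finset.erase_eq_of_notMem hsa
        calc (3 : ℕ) = (a.erase s).card := by rw [hea, ha]
          _ ≤ _ := Finset.card_le_card
            (Finset.subset_union_left.trans Finset.subset_union_left)
    rcases hW_of_two f g h hfh3 hg s1 s2 hs12 with hw | hw
    · exact leaf s1 hs1 hw
    · exact leaf s2 hs2 hw

/-- If the vertices of `J` carry lists with `|L(vᵢ)| = 3` for `i ∈ {1,2,3,6,8}`,
`|L(v₄)| = |L(v₅)| = 5` and `|L(v₇)| = 2`, then the square `J²` has a proper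
coloring from the lists. -/
theorem Jgraph_square_colorable_of_lists (L : Fin 8 → Finset ℕ)
    (h1 : (L 0).card = 3) (h2 : (L 1).card = 3) (h3 : (L 2).card = 3)
    (h6 : (L 5).card = 3) (h8 : (L 7).card = 3)
    (h4 : (L 3).card = 5) (h5 : (L 4).card = 5) (h7 : (L 6).card = 2) :
    ∃ c : Fin 8 → ℕ, (∀ i, c i ∈ L i) ∧
      ∀ u v, (square Jgraph).Adj u v → c u ≠ c v := by
  obtain ⟨x0, x1, x2, x3, x4, x5, x6, x7, m0, m1, m2, m3, m4, m5, m6, m7,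
    d01, d02, d03, d12, d13, d14, d23, d24, d34, d35, d37, d45, d46, d47, d56, d57, d67⟩ :=
    main_lemma (L 0) (L 1) (L 2) (L 3) (L 4) (L 5) (L 6) (L 7) h1 h2 h3 h4 h5 h6 h7 h8
  refine ⟨fun i => [x0, x1, x2, x3, x4, x5, x6, x7].getD i.val 0, ?_, ?_⟩
  · intro i
    fin_cases i
    · exact m0
    · exact m1
    · exact m2
    · exact m3
    · exact m4
    · exact m5
    · exact m6
    · exact m7
  · intro u v huv
    rcases sq_pairs u v huv with ⟨rfl, rfl⟩ | ⟨rfl, rfl⟩ | ⟨rfl, rfl⟩ | ⟨rfl, rfl⟩ |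
      ⟨rfl, rfl⟩ | ⟨rfl, rfl⟩ | ⟨rfl, rfl⟩ | ⟨rfl, rfl⟩ | ⟨rfl, rfl⟩ | ⟨rfl, rfl⟩ |
      ⟨rfl, rfl⟩ | ⟨rfl, rfl⟩ | ⟨rfl, rfl⟩ | ⟨rfl, rfl⟩ | ⟨rfl, rfl⟩ | ⟨rfl, rfl⟩ |
      ⟨rfl, rfl⟩ | ⟨rfl, rfl⟩ | ⟨rfl, rfl⟩ | ⟨rfl, rfl⟩ | ⟨rfl, rfl⟩ | ⟨rfl, rfl⟩ |
      ⟨rfl, rfl⟩ | ⟨rfl, rfl⟩ | ⟨rfl, rfl⟩ | ⟨rfl, rfl⟩ | ⟨rfl, rfl⟩ | ⟨rfl, rfl⟩ |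
      ⟨rfl, rfl⟩ | ⟨rfl, rfl⟩ | ⟨rfl, rfl⟩ | ⟨rfl, rfl⟩ | ⟨rfl, rfl⟩ | ⟨rfl, rfl⟩
    · exact d01
    · exact Ne.symm d01
    · exact d02
    · exact Ne.symm d02
    · exact d03
    · exact Ne.symm d03
    · exact d12
    · exact Ne.symm d12
    · exact d13
    · exact Ne.symm d13
    · exact d14
    · exact Ne.symm d14
    · exact d23
    · exact Ne.symm d23
    · exact d24
    · exact Ne.symm d24
    · exact d34
    · exact Ne.symm d34
    · exact d35
    · exact Ne.symm d35
    · exact d37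
    · exact Ne.symm d37
    · exact d45
    · exact Ne.symm d45
    · exact d46
    · exact Ne.symm d46
    · exact d47
    · exact Ne.symm d47
    · exact d56
    · exact Ne.symm d56
    · exact d57
    · exact Ne.symm d57
    · exact d67
    · exact Ne.symm d67
end

section
/- In a vertex-minimal subcubic planar graph G without 5-cycles whose square is not 7-choosable, no 3-cycle shares an edge with a cycle of length at most 4. In particular, G contains no two triangles sharing an edge and no triangle sharing an edge with a 4-cycle. -/
open SimpleGraph

/-- A graph is `k`-choosable if for every assignment of lists (of colors) of size `k`
to the vertices there is a proper coloring choosing each vertex's color from its list. -/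
def Choosable {V : Type} (G : SimpleGraph V) (k : ℕ) : Prop :=
  ∀ L : V → Finset ℕ, (∀ v, (L v).card = k) →
    ∃ c : V → ℕ, (∀ v, c v ∈ L v) ∧ ∀ u v, G.Adj u v → c u ≠ c v

/-- A graph is subcubic if every vertex has degree at most 3. -/
def Subcubic {V : Type} (G : SimpleGraph V) : Prop :=
  ∀ v : V, (G.neighborSet v).ncard ≤ 3

/-- A graph has no 5-cycles. -/
def NoFiveCycle {V : Type} (G : SimpleGraph V) : Prop :=
  ∀ (v : V) (w : G.Walk v v), w.IsCycle → w.length ≠ 5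

/-- `H` is a minor of `G`: there are nonempty, pairwise disjoint, connected branch
sets in `G`, one for each vertex of `H`, with an edge of `G` between the branch sets
of any two adjacent vertices of `H`. -/
def IsMinor {V W : Type} (G : SimpleGraph V) (H : SimpleGraph W) : Prop :=
  ∃ f : W → Set V,
    (∀ w, (f w).Nonempty) ∧
    (∀ w, (G.induce (f w)).Connected) ∧
    (∀ w₁ w₂, w₁ ≠ w₂ → Disjoint (f w₁) (f w₂)) ∧
    (∀ w₁ w₂, H.Adj w₁ w₂ → ∃ a ∈ f w₁, ∃ b ∈ f w₂, G.Adj a b)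

/-- Planarity, via Wagner's characterization: no `K₅` minor and no `K₃,₃` minor. -/
def Planar {V : Type} (G : SimpleGraph V) : Prop :=
  ¬ IsMinor G (completeGraph (Fin 5)) ∧
  ¬ IsMinor G (completeBipartiteGraph (Fin 3) (Fin 3))


lemma connected_image {V A : Type} {G : SimpleGraph V} {ι : A → V}
    {s : Set A} (h : ((G.comap ι).induce s).Connected) :
    (G.induce (ι '' s)).Connected := by
  have hne : s.Nonempty := by
    obtain ⟨⟨x, hx⟩⟩ := h.nonempty
    exact ⟨x, hx⟩
  rw [connected_iff]
  constructor
  · rintro ⟨x, hx⟩ ⟨y, hy⟩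
    obtain ⟨x', hx', rfl⟩ := hx
    obtain ⟨y', hy', rfl⟩ := hy
    have hr := h.preconnected ⟨x', hx'⟩ ⟨y', hy'⟩
    exact Reachable.map
      (⟨fun z => ⟨ι z.1, ⟨z.1, z.2, rfl⟩⟩, fun {a b} hab => hab⟩ :
        ((G.comap ι).induce s) →g (G.induce (ι '' s))) hr
  · exact ⟨⟨ι hne.choose, ⟨hne.choose, hne.choose_spec, rfl⟩⟩⟩

lemma minor_comap {V A W : Type} {G : SimpleGraph V} {ι : A → V}
    (hinj : Function.Injective ι) {H : SimpleGraph W}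
    (h : IsMinor (G.comap ι) H) : IsMinor G H := by
  obtain ⟨f, hne, hconn, hdisj, hedge⟩ := h
  refine ⟨fun w => ι '' f w, fun w => (hne w).image ι, fun w => connected_image (hconn w),
    fun w₁ w₂ hw => (Set.disjoint_image_iff hinj).2 (hdisj w₁ w₂ hw), ?_⟩
  rintro w₁ w₂ hadj
  obtain ⟨a, ha, b, hb, hab⟩ := hedge w₁ w₂ hadj
  exact ⟨ι a, ⟨a, ha, rfl⟩, ι b, ⟨b, hb, rfl⟩, hab⟩

lemma delete_choosable {V : Type} [Fintype V] [DecidableEq V] (G : SimpleGraph V)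
    (hsub : Subcubic G) (hpl : Planar G) (h5 : NoFiveCycle G)
    (hmin : ∀ (n : ℕ), n < Fintype.card V → ∀ G' : SimpleGraph (Fin n),
      Subcubic G' → Planar G' → NoFiveCycle G' → Choosable (square G') 7)
    (u : V) :
    ∃ (n : ℕ) (ι : Fin n → V), Function.Injective ι ∧ (∀ i, ι i ≠ u) ∧
      (∀ x, x ≠ u → ∃ i, ι i = x) ∧ Choosable (square (G.comap ι)) 7 := by
  classical
  set n := Fintype.card {x : V // x ≠ u} with hn_def
  set e : Fin n ≃ {x : V // x ≠ u} := (Fintype.equivFin {x : V // x ≠ u}).symm with he_def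
  set ι : Fin n → V := fun i => (e i : V) with hι_def
  have hιinj : Function.Injective ι := fun i j h => e.injective (Subtype.ext h)
  have hne : ∀ i, ι i ≠ u := fun i => (e i).2
  have hsurj : ∀ x, x ≠ u → ∃ i, ι i = x := by
    intro x hx
    exact ⟨e.symm ⟨x, hx⟩, by simp [hι_def]⟩
  have hn : n < Fintype.card V := Fintype.card_subtype_lt (x := u) (by simp)
  refine ⟨n, ι, hιinj, hne, hsurj, ?_⟩
  apply hmin n hn
  · -- Subcubic
    intro i
    have h1 : (ι '' (G.comap ι).neighborSet i).ncard = ((G.comap ι).neighborSet i).ncard :=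
      Set.ncard_image_of_injective _ hιinj
    have h2 : ι '' (G.comap ι).neighborSet i ⊆ G.neighborSet (ι i) := by
      rintro y ⟨j, hj, rfl⟩
      exact hj
    calc ((G.comap ι).neighborSet i).ncard = _ := h1.symm
      _ ≤ (G.neighborSet (ι i)).ncard := Set.ncard_le_ncard h2 (Set.toFinite _)
      _ ≤ 3 := hsub (ι i)
  · -- Planar
    exact ⟨fun h => hpl.1 (minor_comap hιinj h), fun h => hpl.2 (minor_comap hιinj h)⟩
  · -- NoFiveCycle
    intro x w hw hlen
    exact h5 (ι x) (w.map ⟨ι, fun h => h⟩)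
      (hw.map (f := ⟨ι, fun h => h⟩) hιinj) (by rw [SimpleGraph.Walk.length_map]; exact hlen)

lemma lemA {V : Type} [Fintype V] (G : SimpleGraph V)
    (hsub : Subcubic G) (hpl : Planar G) (h5 : NoFiveCycle G)
    (hnot : ¬ Choosable (square G) 7)
    (hmin : ∀ (n : ℕ), n < Fintype.card V → ∀ G' : SimpleGraph (Fin n),
      Subcubic G' → Planar G' → NoFiveCycle G' → Choosable (square G') 7)
    {u v a c : V} (huv : G.Adj u v) (hva : G.Adj v a) (hau : G.Adj a u)
    (hvc : G.Adj v c) (hcu : G.Adj c u) (hac : a ≠ c) : False := by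
  classical
  have hNu : G.neighborSet u = {v, a, c} := by
    symm
    apply Set.eq_of_subset_of_ncard_le
    · intro x hx
      rcases hx with rfl | rfl | rfl
      · exact huv
      · exact hau.symm
      · exact hcu.symm
    · calc (G.neighborSet u).ncard ≤ 3 := hsub u
        _ = ({v, a, c} : Set V).ncard := by
          rw [Set.ncard_insert_of_notMem (by simp [hva.ne, hvc.ne]),
            Set.ncard_insert_of_notMem (by simp [hac]), Set.ncard_singleton]
    · exact Set.toFinite _
  have hNv : G.neighborSet v = {u, a, c} := by
    symm
    apply Set.eq_of_subset_of_ncard_le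
    · intro x hx
      rcases hx with rfl | rfl | rfl
      · exact huv.symm
      · exact hva
      · exact hvc
    · calc (G.neighborSet v).ncard ≤ 3 := hsub v
        _ = ({u, a, c} : Set V).ncard := by
          rw [Set.ncard_insert_of_notMem (by simp [hau.ne', hcu.ne']),
            Set.ncard_insert_of_notMem (by simp [hac]), Set.ncard_singleton]
    · exact Set.toFinite _
  set S : Set V := {v, a, c} ∪ (G.neighborSet a \ {u, v}) ∪ (G.neighborSet c \ {u, v})
    with hS_def
  have hSu : u ∉ S := by
    simp only [hS_def, Set.mem_union, Set.mem_insert_iff, Set.mem_singleton_iff,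
      Set.mem_diff]
    rintro (((h | h | h) | ⟨-, h⟩) | ⟨-, h⟩)
    · exact huv.ne h
    · exact hau.ne' h
    · exact hcu.ne' h
    · exact h (Or.inl trivial)
    · exact h (Or.inl trivial)
  have hS5 : S.ncard ≤ 5 := by
    have hda : (G.neighborSet a \ {u, v}).ncard ≤ 1 := by
      have hsubs : ({u, v} : Set V) ⊆ G.neighborSet a := by
        intro x hx
        rcases hx with rfl | rfl
        · exact hau
        · exact hva.symm
      rw [Set.ncard_diff hsubs (Set.toFinite _)]
      have h2 : ({u, v} : Set V).ncard = 2 := by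
        rw [Set.ncard_insert_of_notMem (by simp [huv.ne]), Set.ncard_singleton]
      have := hsub a
      omega
    have hdc : (G.neighborSet c \ {u, v}).ncard ≤ 1 := by
      have hsubs : ({u, v} : Set V) ⊆ G.neighborSet c := by
        intro x hx
        rcases hx with rfl | rfl
        · exact hcu
        · exact hvc.symm
      rw [Set.ncard_diff hsubs (Set.toFinite _)]
      have h2 : ({u, v} : Set V).ncard = 2 := by
        rw [Set.ncard_insert_of_notMem (by simp [huv.ne]), Set.ncard_singleton]
      have := hsub c
      omega
    have h3 : ({v, a, c} : Set V).ncard ≤ 3 := by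
      apply le_trans (Set.ncard_insert_le _ _)
      have := Set.ncard_insert_le a ({c} : Set V)
      simp [Set.ncard_singleton] at this ⊢
      omega
    calc S.ncard ≤ ({v, a, c} ∪ (G.neighborSet a \ {u, v})).ncard
        + (G.neighborSet c \ {u, v}).ncard := Set.ncard_union_le _ _
      _ ≤ ({v, a, c} : Set V).ncard + (G.neighborSet a \ {u, v}).ncard
        + (G.neighborSet c \ {u, v}).ncard := by
          have := Set.ncard_union_le ({v, a, c} : Set V) (G.neighborSet a \ {u, v})
          omega
      _ ≤ 5 := by omega
  have hP1 : ∀ x, (square G).Adj u x → x ∈ S := by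
    rintro x ⟨hxu, hcase | ⟨w, huw, hwx⟩⟩
    · have : x ∈ G.neighborSet u := hcase
      rw [hNu] at this
      exact Or.inl (Or.inl this)
    · have hw : w ∈ G.neighborSet u := huw
      rw [hNu] at hw
      rcases hw with rfl | rfl | rfl
      · have hx : x ∈ G.neighborSet w := hwx
        rw [hNv] at hx
        rcases hx with rfl | rfl | rfl
        · exact absurd rfl hxu.symm
        · exact Or.inl (Or.inl (Or.inr (Or.inl rfl)))
        · exact Or.inl (Or.inl (Or.inr (Or.inr rfl)))
      · by_cases hxv : x = v
        · exact Or.inl (Or.inl (Or.inl hxv))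
        · exact Or.inl (Or.inr ⟨hwx, by simp [Ne.symm hxu, hxv]⟩)
      · by_cases hxv : x = v
        · exact Or.inl (Or.inl (Or.inl hxv))
        · exact Or.inr ⟨hwx, by simp [Ne.symm hxu, hxv]⟩
  obtain ⟨n, ι, hιinj, hιne, hιsurj, hch⟩ := delete_choosable G hsub hpl h5 hmin u
  apply hnot
  intro L hL
  obtain ⟨c', hc'mem, hc'prop⟩ := hch (fun i => L (ι i)) (fun i => hL (ι i))
  set pick : (x : V) → x ≠ u → Fin n := fun x hx => Classical.choose (hιsurj x hx)
    with hpick_def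
  have pick_spec : ∀ x (hx : x ≠ u), ι (pick x hx) = x := by
    intro x hx
    rw [hpick_def]
    exact Classical.choose_spec (hιsurj x hx)
  set g : V → ℕ := fun x => if h : x = u then 0 else c' (pick x h) with hg_def
  have hg : ∀ x (h : x ≠ u), g x = c' (pick x h) := fun x h => dif_neg h
  have himg : ¬ (↑(L u) : Set ℕ) ⊆ g '' S := by
    intro hsub2
    have h1 : ((L u : Set ℕ)).ncard ≤ (g '' S).ncard :=
      Set.ncard_le_ncard hsub2 (Set.toFinite _)
    have h2 : (g '' S).ncard ≤ S.ncard := Set.ncard_image_le (Set.toFinite _)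
    have h3 : ((L u : Set ℕ)).ncard = 7 := by rw [Set.ncard_coe_finset, hL u]
    omega
  obtain ⟨col, hcolL, hcolnot⟩ := Set.not_subset.1 himg
  set f : V → ℕ := fun x => if x = u then col else g x with hf_def
  have hfu : f u = col := by simp [hf_def]
  have hfne : ∀ x, x ≠ u → f x = g x := fun x hx => if_neg hx
  -- key transfer: square G adjacency between two non-u vertices gives square G' adjacency
  have htrans : ∀ x y (hx : x ≠ u) (hy : y ≠ u), (square G).Adj x y →
      (square (G.comap ι)).Adj (pick x hx) (pick y hy) := by
    rintro x y hx hy ⟨hxy, hcase⟩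
    have hpx := pick_spec x hx
    have hpy := pick_spec y hy
    refine ⟨fun h => hxy (by rw [← hpx, ← hpy, h]), ?_⟩
    have key : G.Adj x y ∨ ∃ w, w ≠ u ∧ G.Adj x w ∧ G.Adj w y := by
      rcases hcase with h | ⟨w, hxw, hwy⟩
      · exact Or.inl h
      · by_cases hwu : w = u
        · subst hwu
          have hx' : x ∈ G.neighborSet w := hxw.symm
          have hy' : y ∈ G.neighborSet w := hwy
          rw [hNu] at hx' hy'
          rcases hx' with rfl | rfl | rfl <;> rcases hy' with rfl | rfl | rfl
          · exact absurd rfl hxy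
          · exact Or.inl hva
          · exact Or.inl hvc
          · exact Or.inl hva.symm
          · exact absurd rfl hxy
          · exact Or.inr ⟨v, huv.ne', hva.symm, hvc⟩
          · exact Or.inl hvc.symm
          · exact Or.inr ⟨v, huv.ne', hvc.symm, hva⟩
          · exact absurd rfl hxy
        · exact Or.inr ⟨w, hwu, hxw, hwy⟩
    rcases key with h | ⟨w, hwu, hxw, hwy⟩
    · exact Or.inl (by rw [SimpleGraph.comap_adj, hpx, hpy]; exact h)
    · refine Or.inr ⟨pick w hwu, ?_, ?_⟩
      · rw [SimpleGraph.comap_adj, hpx, pick_spec w hwu]; exact hxw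
      · rw [SimpleGraph.comap_adj, hpy, pick_spec w hwu]; exact hwy
  refine ⟨f, ?_, ?_⟩
  · intro x
    by_cases hx : x = u
    · rw [hx, hfu]; exact hcolL
    · rw [hfne x hx, hg x hx]
      have := hc'mem (pick x hx)
      simpa [pick_spec x hx] using this
  · intro x y hxy
    by_cases hx : x = u
    · rw [hx] at hxy
      rw [hx]
      have hy : y ≠ u := Ne.symm hxy.1
      have hyS : y ∈ S := hP1 y hxy
      rw [hfu, hfne y hy]
      intro hcol
      exact hcolnot ⟨y, hyS, hcol.symm⟩
    · by_cases hy : y = u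
      · rw [hy] at hxy
        rw [hy]
        have hxS : x ∈ S := hP1 x hxy.symm
        rw [hfu, hfne x hx]
        intro hcol
        exact hcolnot ⟨x, hxS, hcol⟩
      · have := hc'prop _ _ (htrans x y hx hy hxy)
        rw [hfne x hx, hfne y hy, hg x hx, hg y hy]
        exact this

lemma walk_len3 {V : Type} {G : SimpleGraph V} {x : V} (w : G.Walk x x) (h : w.length = 3) :
    ∃ (b c : V) (_ : G.Adj x b) (_ : G.Adj b c) (_ : G.Adj c x),
      w.edges = [s(x,b), s(b,c), s(c,x)] ∧ w.support = [x, b, c, x] := by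
  match w with
  | .nil => simp at h
  | .cons h1 (.nil) => simp at h
  | .cons h1 (.cons h2 .nil) => simp at h
  | .cons (v := b) h1 (.cons (v := c) h2 (.cons h3 .nil)) =>
    exact ⟨b, c, h1, h2, h3, by simp, by simp⟩
  | .cons h1 (.cons h2 (.cons h3 (.cons h4 p))) => simp at h

lemma walk_len4 {V : Type} {G : SimpleGraph V} {x : V} (w : G.Walk x x) (h : w.length = 4) :
    ∃ (b c d : V) (_ : G.Adj x b) (_ : G.Adj b c) (_ : G.Adj c d) (_ : G.Adj d x),
      w.edges = [s(x,b), s(b,c), s(c,d), s(d,x)] ∧ w.support = [x, b, c, d, x] := by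
  match w with
  | .nil => simp at h
  | .cons h1 (.nil) => simp at h
  | .cons h1 (.cons h2 .nil) => simp at h
  | .cons h1 (.cons h2 (.cons h3 .nil)) => simp at h
  | .cons (v := b) h1 (.cons (v := c) h2 (.cons (v := d) h3 (.cons h4 .nil))) =>
    exact ⟨b, c, d, h1, h2, h3, h4, by simp, by simp⟩
  | .cons h1 (.cons h2 (.cons h3 (.cons h4 (.cons h5 p)))) => simp at h

lemma tri_extract {V : Type} {G : SimpleGraph V} {p q r u v : V}
    (hpq : G.Adj p q) (hqr : G.Adj q r) (hrp : G.Adj r p)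
    (he : s(u,v) = s(p,q) ∨ s(u,v) = s(q,r) ∨ s(u,v) = s(r,p)) :
    ∃ w, G.Adj u v ∧ G.Adj v w ∧ G.Adj w u ∧
      ({s(p,q), s(q,r), s(r,p)} : Set (Sym2 V)) = {s(u,v), s(v,w), s(w,u)} := by
  have swap : ∀ a b : V, s(a,b) = s(b,a) := fun a b => Sym2.eq_swap
  rcases he with he | he | he <;> rw [Sym2.eq_iff] at he <;>
    rcases he with ⟨rfl, rfl⟩ | ⟨rfl, rfl⟩
  · exact ⟨r, hpq, hqr, hrp, rfl⟩
  · refine ⟨r, hpq.symm, hrp.symm, hqr.symm, ?_⟩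
    rw [swap u v, swap r u, swap v r]
    ext e; simp; tauto
  · refine ⟨p, hqr, hrp, hpq, ?_⟩
    ext e; simp; tauto
  · refine ⟨p, hqr.symm, hpq.symm, hrp.symm, ?_⟩
    rw [swap u v, swap p u, swap v p]
    ext e; simp; tauto
  · refine ⟨q, hrp, hpq, hqr, ?_⟩
    ext e; simp; tauto
  · refine ⟨q, hrp.symm, hqr.symm, hpq.symm, ?_⟩
    rw [swap u v, swap q u, swap v q]
    ext e; simp; tauto

lemma quad_extract {V : Type} {G : SimpleGraph V} {p q r t u v : V}
    (h1 : G.Adj p q) (h2 : G.Adj q r) (h3 : G.Adj r t) (h4 : G.Adj t p)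
    (hpr : p ≠ r) (hqt : q ≠ t)
    (he : s(u,v) = s(p,q) ∨ s(u,v) = s(q,r) ∨ s(u,v) = s(r,t) ∨ s(u,v) = s(t,p)) :
    ∃ w z, G.Adj u v ∧ G.Adj v w ∧ G.Adj w z ∧ G.Adj z u ∧
      u ≠ w ∧ v ≠ z ∧ u ≠ v ∧ w ≠ z := by
  rcases he with he | he | he | he <;> rw [Sym2.eq_iff] at he <;>
    rcases he with ⟨rfl, rfl⟩ | ⟨rfl, rfl⟩
  · exact ⟨r, t, h1, h2, h3, h4, hpr, hqt, h1.ne, h3.ne⟩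
  · exact ⟨t, r, h1.symm, h4.symm, h3.symm, h2.symm, hqt, hpr, h1.ne', h3.ne'⟩
  · exact ⟨t, p, h2, h3, h4, h1, hqt, hpr.symm, h2.ne, h4.ne⟩
  · exact ⟨p, t, h2.symm, h1.symm, h4.symm, h3.symm, hpr.symm, hqt, h2.ne', h4.ne'⟩
  · exact ⟨p, q, h3, h4, h1, h2, hpr.symm, hqt.symm, h3.ne, h1.ne⟩
  · exact ⟨q, p, h3.symm, h2.symm, h1.symm, h4.symm, hqt.symm, hpr.symm, h3.ne', h1.ne'⟩
  · exact ⟨q, r, h4, h1, h2, h3, hqt.symm, hpr, h4.ne, h2.ne⟩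
  · exact ⟨r, q, h4.symm, h3.symm, h2.symm, h1.symm, hpr, hqt.symm, h4.ne', h2.ne'⟩

lemma lemB {V : Type} [Fintype V] (G : SimpleGraph V)
    (hsub : Subcubic G) (hpl : Planar G) (h5 : NoFiveCycle G)
    (hnot : ¬ Choosable (square G) 7)
    (hmin : ∀ (n : ℕ), n < Fintype.card V → ∀ G' : SimpleGraph (Fin n),
      Subcubic G' → Planar G' → NoFiveCycle G' → Choosable (square G') 7)
    {u v a p q : V} (huv : G.Adj u v) (hva : G.Adj v a) (hau : G.Adj a u)
    (hvp : G.Adj v p) (hpq : G.Adj p q) (hqu : G.Adj q u)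
    (hup : u ≠ p) (hvq : v ≠ q) : False := by
  by_cases hap : a = p
  · subst hap
    exact lemA G hsub hpl h5 hnot hmin hau.symm hva.symm huv.symm hpq hqu hvq
  · by_cases haq : a = q
    · subst haq
      exact lemA G hsub hpl h5 hnot hmin hva hau huv hpq.symm hvp.symm hup
    · -- construct a 5-cycle a-u-q-p-v-a
      have hdist : u ≠ q ∧ u ≠ v ∧ u ≠ a ∧ q ≠ p ∧ q ≠ v ∧ q ≠ a ∧ p ≠ v ∧ p ≠ a ∧ v ≠ a :=
        ⟨hqu.ne', huv.ne, hau.ne', hpq.ne', hvq.symm, Ne.symm haq, hvp.ne', Ne.symm hap,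
          hva.ne⟩
      obtain ⟨h1, h2, h3, h4, h5', h6, h7, h8, h9⟩ := hdist
      set w : G.Walk a a :=
        .cons hau (.cons hqu.symm (.cons hpq.symm (.cons hvp.symm (.cons hva .nil))))
        with hw_def
      have hcyc : w.IsCycle := by
        rw [SimpleGraph.Walk.isCycle_def]
        refine ⟨?_, by simp [hw_def], ?_⟩
        · rw [SimpleGraph.Walk.isTrail_def]
          simp [hw_def, Sym2.eq_iff]
          push_neg
          tauto
        · simp [hw_def]
          push_neg
          tauto
      exact h5 a w hcyc (by simp [hw_def])

/-- In a vertex-minimal subcubic planar graph without 5-cycles whose square is not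
7-choosable, no 3-cycle shares an edge with a cycle of length at most 4. -/
theorem minimal_counterexample_no_triangle_sharing_edge_with_short_cycle
    {V : Type} [Fintype V] (G : SimpleGraph V)
    (hsub : Subcubic G) (hpl : Planar G) (h5 : NoFiveCycle G)
    (hnot : ¬ Choosable (square G) 7)
    (hmin : ∀ (n : ℕ), n < Fintype.card V → ∀ G' : SimpleGraph (Fin n),
      Subcubic G' → Planar G' → NoFiveCycle G' → Choosable (square G') 7) :
    ¬ ∃ (x y : V) (c₁ : G.Walk x x) (c₂ : G.Walk y y),
      c₁.IsCycle ∧ c₂.IsCycle ∧ c₁.length = 3 ∧ c₂.length ≤ 4 ∧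
      {e | e ∈ c₁.edges} ≠ {e | e ∈ c₂.edges} ∧
      ∃ e, e ∈ c₁.edges ∧ e ∈ c₂.edges := by
  
  rintro ⟨x, y, c₁, c₂, h1c, h2c, hl1, hl2, hne, e, he1, he2⟩
  obtain ⟨⟨u, v⟩, rfl⟩ := e.exists_rep
  obtain ⟨b1, b2, hA1, hA2, hA3, hedges1, hsupp1⟩ := walk_len3 c₁ hl1
  rw [hedges1] at he1
  simp only [List.mem_cons, List.not_mem_nil, or_false] at he1
  obtain ⟨a, huv, hva, hau, hset1'⟩ := tri_extract hA1 hA2 hA3 he1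
  have hset1 : {e | e ∈ c₁.edges} = ({s(u,v), s(v,a), s(a,u)} : Set (Sym2 V)) := by
    rw [← hset1', hedges1]
    ext f
    simp
  have h34 : c₂.length = 3 ∨ c₂.length = 4 := by
    have := h2c.three_le_length
    omega
  rcases h34 with hl | hl
  · obtain ⟨d1, d2, hB1, hB2, hB3, hedges2, hsupp2⟩ := walk_len3 c₂ hl
    rw [hedges2] at he2
    simp only [List.mem_cons, List.not_mem_nil, or_false] at he2
    obtain ⟨cc, huv', hvc, hcu, hset2'⟩ := tri_extract hB1 hB2 hB3 he2
    have hset2 : {e | e ∈ c₂.edges} = ({s(u,v), s(v,cc), s(cc,u)} : Set (Sym2 V)) := by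
      rw [← hset2', hedges2]
      ext f
      simp
    have hac : a ≠ cc := by
      rintro rfl
      exact hne (hset1.trans hset2.symm)
    exact lemA G hsub hpl h5 hnot hmin huv hva hau hvc hcu hac
  · obtain ⟨d1, d2, d3, hB1, hB2, hB3, hB4, hedges2, hsupp2⟩ := walk_len4 c₂ hl
    have hnodup := (SimpleGraph.Walk.isCycle_def _).1 h2c |>.2.2
    rw [hsupp2] at hnodup
    simp only [List.tail_cons, List.nodup_cons, List.mem_cons, List.not_mem_nil,
      List.nodup_nil, or_false, not_or] at hnodup
    obtain ⟨⟨hn1, hn2, hn3⟩, ⟨hn4, hn5⟩, hn6, -⟩ := hnodup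
    have hyd2 : y ≠ d2 := Ne.symm hn5
    have hd1d3 : d1 ≠ d3 := hn2
    rw [hedges2] at he2
    simp only [List.mem_cons, List.not_mem_nil, or_false] at he2
    obtain ⟨w, z, huv', hvw, hwz, hzu, hnuw, hnvz, _, _⟩ :=
      quad_extract hB1 hB2 hB3 hB4 hyd2 hd1d3 he2
    exact lemB G hsub hpl h5 hnot hmin huv hva hau hvw hwz hzu hnuw hnvz
end
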